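/- arXiv:1309.7229 — 8 statements merged into one kernel-verified Lean document; each statement's English description precedes it below -/
import Mathlib

section
/- Let k be a field and n ≥ 1. If a = (a_1, …, a_n) ∈ ℤ^n satisfies gcd(a_1, …, a_n) = 1, then the principal ideal generated by X^a − 1 in the Laurent polynomial ring k[x_1^{±1}, …, x_n^{±1}] is a prime ideal. -/
open Finsupp AddMonoidAlgebra

private lemma bezout_finset {ι : Type*} [DecidableEq ι] (s : Finset ι) (a : ι → ℤ) :
    ∃ u : ι → ℤ, (s.gcd a : ℤ) = ∑ i ∈ s, u i * a i := by
  induction s using Finset.induction with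
  | empty => exact ⟨0, by simp⟩
  | @insert j s hj ih =>
    obtain ⟨u, hu⟩ := ih
    set g := s.gcd a with hg
    refine ⟨fun i => if i = j then Int.gcdA (a j) g else Int.gcdB (a j) g * u i, ?_⟩
    rw [Finset.gcd_insert, Finset.sum_insert hj]
    simp only [if_pos rfl]
    have h := Int.gcd_eq_gcd_ab (a j) g
    have hgg : GCDMonoid.gcd (a j) g = (Int.gcd (a j) g : ℤ) := by simp [Int.coe_gcd]
    rw [hgg, h]
    have hsum : ∑ x ∈ s, (if x = j then Int.gcdA (a j) g else Int.gcdB (a j) g * u x) * a x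
        = Int.gcdB (a j) g * ∑ x ∈ s, u x * a x := by
      rw [Finset.mul_sum]
      refine Finset.sum_congr rfl fun i hi => ?_
      rw [if_neg (by rintro rfl; exact hj hi)]; ring
    rw [hsum, ← hu]
    simp only [if_true]
    ring

private def coeHom (n : ℕ) : (Fin n →₀ ℤ) →+ (Fin n → ℚ) where
  toFun x := fun i => (x i : ℚ)
  map_zero' := by funext i; simp
  map_add' x y := by funext i; simp

set_option maxHeartbeats 1000000 in
/-- For a field `k` and a primitive integer vector `a ∈ ℤⁿ`
(`gcd(a₁,…,aₙ) = 1`), the principal ideal generated by `Xᵃ − 1` in the Laurent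
polynomial ring `k[x₁^{±1},…,xₙ^{±1}]` (the group algebra of `ℤⁿ` over `k`)
is prime. -/
theorem stmt_0 {k : Type*} [Field k] {n : ℕ} (hn : 1 ≤ n) (a : Fin n → ℤ)
    (ha : Finset.univ.gcd a = 1) :
    (Ideal.span {(AddMonoidAlgebra.single (Finsupp.equivFunOnFinite.symm a) 1 :
        AddMonoidAlgebra k (Fin n →₀ ℤ)) - 1}).IsPrime := by
  classical
  set a' : Fin n →₀ ℤ := Finsupp.equivFunOnFinite.symm a with ha'def
  have ha'app : ∀ i, a' i = a i := fun i => rfl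
  set R := AddMonoidAlgebra k (Fin n →₀ ℤ) with hR
  set I : Ideal R := Ideal.span
    {(AddMonoidAlgebra.single a' 1 : R) - 1} with hIdef
  -- the target vector space and the map
  set W : Submodule ℚ (Fin n → ℚ) := Submodule.span ℚ {fun i => (a i : ℚ)} with hW
  set f : (Fin n →₀ ℤ) →+ ((Fin n → ℚ) ⧸ W) :=
    W.mkQ.toAddMonoidHom.comp (coeHom n) with hf
  have hfa : f a' = 0 := by
    have : coeHom n a' = fun i => (a i : ℚ) := by funext i; simp [coeHom, ha'app]
    simp only [hf, AddMonoidHom.comp_apply, LinearMap.toAddMonoidHom_coe, this,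
      Submodule.mkQ_apply]
    rw [Submodule.Quotient.mk_eq_zero]
    exact Submodule.mem_span_singleton_self _
  -- kernel of f
  have hker : ∀ x : Fin n →₀ ℤ, f x = 0 → ∃ m : ℤ, x = m • a' := by
    intro x hx
    have hmem : coeHom n x ∈ W := by
      simpa [hf, Submodule.Quotient.mk_eq_zero] using hx
    rw [hW, Submodule.mem_span_singleton] at hmem
    obtain ⟨c, hc⟩ := hmem
    have hc' : ∀ i, c * (a i : ℚ) = (x i : ℚ) := by
      intro i
      have := congrFun hc i
      simpa [coeHom] using this
    obtain ⟨u, hu⟩ := bezout_finset Finset.univ a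
    rw [ha] at hu
    refine ⟨∑ i, u i * x i, ?_⟩
    have hcm : c = ((∑ i, u i * x i : ℤ) : ℚ) := by
      push_cast
      have : ∀ i ∈ Finset.univ, (u i : ℚ) * (x i : ℚ) = c * ((u i : ℚ) * (a i : ℚ)) := by
        intro i _
        rw [← hc' i]; ring
      rw [Finset.sum_congr rfl this, ← Finset.mul_sum]
      have : (∑ i, (u i : ℚ) * (a i : ℚ)) = ((∑ i, u i * a i : ℤ) : ℚ) := by push_cast; rfl
      rw [this, ← hu]
      norm_num
    ext i
    have h2 : (x i : ℚ) = (((∑ j, u j * x j : ℤ) • a') i : ℚ) := by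
      rw [← hc' i, hcm]
      simp [ha'app]
    exact_mod_cast h2
  -- quotient ring map as an algebra hom
  set mkI : R →ₐ[k] R ⧸ I := Ideal.Quotient.mkₐ k I with hmkI
  have hmk : ∀ x y : R, x - y ∈ I → mkI x = mkI y := by
    intro x y hxy
    simp only [hmkI, Ideal.Quotient.mkₐ_eq_mk]
    exact Ideal.Quotient.eq.mpr hxy
  have hmul : ∀ x y : Fin n →₀ ℤ,
      (AddMonoidAlgebra.single x (1:k) : R) * AddMonoidAlgebra.single y 1
        = AddMonoidAlgebra.single (x + y) 1 := by
    intro x y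
    rw [AddMonoidAlgebra.single_mul_single, one_mul]
  have hone : (AddMonoidAlgebra.single (0 : Fin n →₀ ℤ) (1:k) : R) = 1 :=
    (AddMonoidAlgebra.one_def).symm
  have h1 : mkI (AddMonoidAlgebra.single a' (1:k)) = 1 := by
    rw [show (1 : R ⧸ I) = mkI 1 from (map_one _).symm]
    exact hmk _ _ (Ideal.subset_span (Set.mem_singleton _))
  have hneg : mkI (AddMonoidAlgebra.single (-a') (1:k)) = 1 := by
    have h2 : mkI (AddMonoidAlgebra.single (-a') (1:k)) * mkI (AddMonoidAlgebra.single a' 1)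
        = 1 := by
      rw [← map_mul, hmul, neg_add_cancel, hone, map_one]
    rwa [h1, mul_one] at h2
  have lemA : ∀ m : ℤ, mkI (AddMonoidAlgebra.single (m • a') (1:k)) = 1 := by
    intro m
    induction m using Int.induction_on with
    | zero => rw [zero_smul, hone, map_one]
    | succ i ih =>
      have hs : ((i : ℤ) + 1) • a' = (i : ℤ) • a' + a' := by rw [add_smul, one_smul]
      rw [hs, ← hmul, map_mul, ih, h1, one_mul]
    | pred i ih =>
      have hs : (-(i : ℤ) - 1) • a' = (-(i : ℤ)) • a' + (-a') := by
        rw [sub_smul, one_smul, sub_eq_add_neg, neg_smul]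
      rw [hs, ← hmul, map_mul, ih, hneg, one_mul]
  have lemB : ∀ x y : Fin n →₀ ℤ, f x = f y →
      mkI (AddMonoidAlgebra.single x (1:k)) = mkI (AddMonoidAlgebra.single y 1) := by
    intro x y hxy
    obtain ⟨m, hm⟩ := hker (x - y) (by rw [map_sub, hxy, sub_self])
    have hx : x = y + m • a' := by rw [← hm, add_sub_cancel]
    rw [hx, ← hmul, map_mul, lemA, mul_one]
  -- the target is a domain
  haveI : NoZeroDivisors (AddMonoidAlgebra k ((Fin n → ℚ) ⧸ W)) := inferInstance
  haveI : IsDomain (AddMonoidAlgebra k ((Fin n → ℚ) ⧸ W)) := NoZeroDivisors.to_isDomain _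
  set φ : R →+* AddMonoidAlgebra k ((Fin n → ℚ) ⧸ W) :=
    AddMonoidAlgebra.mapDomainRingHom k f with hphi
  have hφsingle : ∀ (g : Fin n →₀ ℤ) (c : k),
      φ (AddMonoidAlgebra.single g c) = AddMonoidAlgebra.single (f g) c := by
    intro g c
    simp only [hphi, AddMonoidAlgebra.mapDomainRingHom_apply, AddMonoidAlgebra.single]
    exact AddMonoidAlgebra.mapDomain_single
  -- a set-theoretic section of f on its range
  set sec : ((Fin n → ℚ) ⧸ W) → (Fin n →₀ ℤ) :=
    fun v => if h : ∃ g, f g = v then h.choose else 0 with hsecdef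
  have hsecf : ∀ g : Fin n →₀ ℤ, f (sec (f g)) = f g := by
    intro g
    have hex : ∃ g', f g' = f g := ⟨g, rfl⟩
    simp only [hsecdef, dif_pos hex]
    exact hex.choose_spec
  set ψ : AddMonoidAlgebra k ((Fin n → ℚ) ⧸ W) →ₗ[k] (R ⧸ I) :=
    (Finsupp.lift (R ⧸ I) k _ (fun v => mkI (AddMonoidAlgebra.single (sec v) 1))).comp
      (AddMonoidAlgebra.coeffLinearEquiv k).toLinearMap with hpsi
  have hψsingle : ∀ (v : (Fin n → ℚ) ⧸ W) (c : k),
      ψ (AddMonoidAlgebra.single v c) = c • mkI (AddMonoidAlgebra.single (sec v) 1) := by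
    intro v c
    simp only [hpsi, AddMonoidAlgebra.single]
    rw [LinearMap.comp_apply, LinearEquiv.coe_coe, AddMonoidAlgebra.coeffLinearEquiv_apply,
      AddMonoidAlgebra.coeff_ofCoeff]
    erw [Finsupp.lift_apply]
    exact Finsupp.sum_single_index (zero_smul _ _)
  have key : ∀ p : R, ψ (φ p) = mkI p := by
    intro p
    induction p using AddMonoidAlgebra.induction_linear with
    | zero => simp
    | add p q hp hq => rw [map_add, map_add, map_add, hp, hq]
    | single g c =>
      rw [hφsingle, hψsingle, lemB _ g (hsecf g),
        show (AddMonoidAlgebra.single g c : R) = c • AddMonoidAlgebra.single g 1 by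
          rw [AddMonoidAlgebra.smul_single', mul_one], map_smul]
  have hIker : I = RingHom.ker φ := by
    refine le_antisymm ?_ fun p hp => ?_
    · rw [hIdef, Ideal.span_le]
      rintro x hx
      rw [Set.mem_singleton_iff] at hx
      subst hx
      simp only [SetLike.mem_coe, RingHom.mem_ker, map_sub, map_one, hφsingle, hfa]
      rw [← AddMonoidAlgebra.one_def, sub_self]
    · rw [RingHom.mem_ker] at hp
      have hkey := key p
      rw [hp, map_zero] at hkey
      have : Ideal.Quotient.mk I p = 0 := by
        rw [← Ideal.Quotient.mkₐ_eq_mk k, ← hmkI, ← hkey]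
      exact Ideal.Quotient.eq_zero_iff_mem.mp this
  rw [hIker]
  exact RingHom.ker_isPrime φ
end

section
/- Let k be an algebraically closed field, n ≥ 2, and let f ∈ k[x_1, …, x_n] be an irreducible polynomial such that for every t ∈ k and every point (c_1, …, c_n) ∈ k^n with f(c_1, …, c_n) = 0, one also has f(c_1 + t, …, c_n + t) = 0 (the zero set of f is stable under simultaneous translation of all coordinates). Then there exists a polynomial g ∈ k[y_1, …, y_{n−1}] such that f(x_1, …, x_n) = g(x_1 − x_2, x_2 − x_3, …, x_{n−1} − x_n). -/
open MvPolynomial Finset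

namespace Stmt3Aux

variable {R : Type*} [CommRing R] {n : ℕ}

/-- Forward coordinate change on points: first coordinate, then successive differences. -/
def D (c : Fin (n + 1) → R) : Fin (n + 1) → R :=
  Fin.cases (c 0) (fun j => c j.castSucc - c j.succ)

/-- Inverse coordinate change on points. -/
def S (d : Fin (n + 1) → R) (i : Fin (n + 1)) : R :=
  d 0 - ∑ j ∈ univ.filter (fun j : Fin n => j.succ ≤ i), d j.succ

lemma filter_zero :
    (univ.filter (fun j : Fin n => j.succ ≤ (0 : Fin (n + 1)))) = ∅ := by
  ext j
  simp [Fin.le_def]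

lemma filter_succ (i : Fin n) :
    (univ.filter (fun j : Fin n => j.succ ≤ i.succ)) =
      insert i (univ.filter (fun j : Fin n => j.succ ≤ i.castSucc)) := by
  ext j
  simp only [mem_filter, mem_univ, true_and, mem_insert, Fin.le_def, Fin.val_succ,
    Fin.coe_castSucc, Fin.ext_iff]
  omega

lemma notMem_filter (i : Fin n) :
    i ∉ univ.filter (fun j : Fin n => j.succ ≤ i.castSucc) := by
  simp [Fin.le_def]

lemma S_D (c : Fin (n + 1) → R) (i : Fin (n + 1)) : S (D c) i = c i := by
  induction i using Fin.induction with
  | zero => simp [S, D, Fin.succ_ne_zero]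
  | succ i ih =>
      simp only [S, D, Fin.cases_succ, Fin.cases_zero] at ih ⊢
      rw [filter_succ, Finset.sum_insert (notMem_filter i)]
      linear_combination ih
  
lemma D_S (d : Fin (n + 1) → R) (i : Fin (n + 1)) : D (S d) i = d i := by
  induction i using Fin.cases with
  | zero => simp [D, S, Fin.succ_ne_zero]
  | succ j =>
      simp only [D, Fin.cases_succ, S]
      rw [filter_succ, Finset.sum_insert (notMem_filter j)]
      ring

lemma algHom_S {A B : Type*} [CommRing A] [CommRing B] {K : Type*} [CommRing K]
    [Algebra K A] [Algebra K B] (φ : A →ₐ[K] B) (d : Fin (n + 1) → A) (i : Fin (n + 1)) :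
    φ (S d i) = S (fun j => φ (d j)) i := by
  simp [S, map_sub, map_sum]

end Stmt3Aux

open Stmt3Aux

/-- Over an algebraically closed field, an irreducible polynomial
in `n + 1 ≥ 2` variables whose zero set is stable under simultaneous translation
of all coordinates is a polynomial in the successive differences
`x₁ − x₂, …, xₙ − x_{n+1}`. -/
theorem stmt_3 {k : Type*} [Field k] [IsAlgClosed k] {n : ℕ} (hn : 1 ≤ n)
    (f : MvPolynomial (Fin (n + 1)) k) (hf : Irreducible f)
    (hstab : ∀ (t : k) (c : Fin (n + 1) → k), MvPolynomial.eval c f = 0 →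
      MvPolynomial.eval (fun i => c i + t) f = 0) :
    ∃ g : MvPolynomial (Fin n) k,
      f = MvPolynomial.aeval
        (fun j : Fin n => MvPolynomial.X j.castSucc - MvPolynomial.X j.succ) g := by
  classical
  set F : MvPolynomial (Fin (n + 1)) k := aeval (S X) f with hFdef
  -- `f` is recovered from `F` by the inverse substitution.
  have hfF : f = aeval (D X) F := by
    rw [hFdef, comp_aeval_apply]
    have h1 : (fun i => (aeval (D X) : MvPolynomial (Fin (n + 1)) k →ₐ[k]
        MvPolynomial (Fin (n + 1)) k) (S X i)) =
        (X : Fin (n + 1) → MvPolynomial (Fin (n + 1)) k) := by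
      funext i
      rw [algHom_S ((aeval (D X) : MvPolynomial (Fin (n + 1)) k →ₐ[k]
        MvPolynomial (Fin (n + 1)) k)) X i]
      simp only [aeval_X]
      exact S_D (X : Fin (n + 1) → MvPolynomial (Fin (n + 1)) k) i
    rw [h1, aeval_X_left_apply]
  -- evaluation of `F`
  have hevalF : ∀ d : Fin (n + 1) → k, eval d F = eval (S d) f := by
    intro d
    rw [hFdef]
    have h2 : (fun i => (aeval d : MvPolynomial (Fin (n + 1)) k →ₐ[k] k) (S X i)) = S d := by
      funext i
      rw [algHom_S (aeval d : MvPolynomial (Fin (n + 1)) k →ₐ[k] k) X i]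
      simp only [aeval_X]
    calc eval d (aeval (S X) f)
        = (aeval d : MvPolynomial (Fin (n + 1)) k →ₐ[k] k) (aeval (S X) f) := rfl
      _ = aeval (fun i => (aeval d : MvPolynomial (Fin (n + 1)) k →ₐ[k] k) (S X i)) f :=
          comp_aeval_apply (S X) (aeval d : MvPolynomial (Fin (n + 1)) k →ₐ[k] k) f
      _ = aeval (S d) f := by rw [h2]
      _ = eval (S d) f := rfl
  -- zero set of `F` is stable under translation of the 0-th coordinate
  have hstabF : ∀ (t : k) (d : Fin (n + 1) → k), eval d F = 0 →
      eval (Function.update d 0 (d 0 + t)) F = 0 := by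
    intro t d hd
    rw [hevalF] at hd ⊢
    have h2 : S (Function.update d 0 (d 0 + t)) = fun i => S d i + t := by
      funext i
      have hupd0 : Function.update d 0 (d 0 + t) 0 = d 0 + t := by simp
      have hupds : ∀ j : Fin n, Function.update d 0 (d 0 + t) j.succ = d j.succ :=
        fun j => Function.update_of_ne (Fin.succ_ne_zero j) _ _
      simp only [S, hupd0]
      rw [Finset.sum_congr rfl (fun j _ => hupds j)]
      ring
    rw [h2]
    exact hstab t (S d) hd
  -- the polynomial `q` in the distinguished variable 0
  set q := finSuccEquiv k n F with hq
  have hdeg : q.natDegree = 0 := by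
    by_contra hd0
    have hqne : q ≠ 0 := fun h => hd0 (by rw [h]; simp)
    have hlc : q.leadingCoeff ≠ 0 := fun h => hqne (Polynomial.leadingCoeff_eq_zero.mp h)
    obtain ⟨y0, hy0⟩ : ∃ y0 : Fin n → k, eval y0 q.leadingCoeff ≠ 0 := by
      by_contra h
      push_neg at h
      exact hlc (MvPolynomial.funext (fun x => by simpa using h x))
    set p := q.map (eval y0 : MvPolynomial (Fin n) k →+* k) with hp
    have hcoeff : p.coeff q.natDegree ≠ 0 := by
      rw [hp, Polynomial.coeff_map]
      exact hy0
    have hpdeg : 0 < p.natDegree :=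
      lt_of_lt_of_le (Nat.pos_of_ne_zero hd0) (Polynomial.le_natDegree_of_ne_zero hcoeff)
    have hdne : p.degree ≠ 0 := by
      intro h
      rw [Polynomial.natDegree_pos_iff_degree_pos] at hpdeg
      rw [h] at hpdeg
      exact lt_irrefl _ hpdeg
    obtain ⟨z0, hz0⟩ := IsAlgClosed.exists_root p hdne
    -- every point is a root of p
    have hall : ∀ z : k, p.eval z = 0 := by
      intro z
      have h1 : eval (Fin.cons z0 y0 : Fin (n + 1) → k) F = 0 := by
        rw [eval_eq_eval_mv_eval', ← hq, ← hp]
        exact hz0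
      have h2 := hstabF (z - z0) (Fin.cons z0 y0) h1
      rw [Fin.update_cons_zero] at h2
      have h3 : (Fin.cons z0 y0 : Fin (n + 1) → k) 0 + (z - z0) = z := by
        simp
      rw [h3] at h2
      rw [eval_eq_eval_mv_eval', ← hq, ← hp] at h2
      exact h2
    have : p = 0 := Polynomial.zero_of_eval_zero p hall
    rw [this] at hcoeff
    simp at hcoeff
  -- hence q is constant, so F does not involve the variable 0
  set a := q.coeff 0 with ha
  have hqC : q = Polynomial.C a := Polynomial.eq_C_of_natDegree_le_zero (le_of_eq hdeg)
  have hrename : finSuccEquiv k n (rename Fin.succ a) = Polynomial.C a := by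
    have key : ((finSuccEquiv k n).toAlgHom.comp (rename Fin.succ) :
        MvPolynomial (Fin n) k →ₐ[k] Polynomial (MvPolynomial (Fin n) k)) =
        Polynomial.CAlgHom.comp (AlgHom.id k (MvPolynomial (Fin n) k)) := by
      apply MvPolynomial.algHom_ext
      intro i
      simp [finSuccEquiv_X_succ, Polynomial.CAlgHom]
    have := AlgHom.congr_fun key a
    simpa [Polynomial.CAlgHom] using this
  have hF : F = rename Fin.succ a := by
    apply (finSuccEquiv k n).injective
    rw [hrename, ← hq, hqC]
  refine ⟨a, ?_⟩
  rw [hfF, hF, aeval_rename]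
  have hcomp : ((D X : Fin (n + 1) → MvPolynomial (Fin (n + 1)) k) ∘ Fin.succ) =
      fun j : Fin n => X j.castSucc - X j.succ := by
    funext j
    simp [Function.comp, D, Fin.cases_succ]
  rw [hcomp]
end

section
/- Let Γ = {Γ_1, …, Γ_d} be a hypertree on {1, …, n}. Then |Γ_i ∩ Γ_j| ≤ 2 for all i ≠ j. Consequently, for any choice, for each i, of two distinguished elements a_{i1}, a_{i2} ∈ Γ_i, the 3-element sets {a_{i1}, a_{i2}, c}, taken over all 1 ≤ i ≤ d and all c ∈ Γ_i ∖ {a_{i1}, a_{i2}}, are pairwise distinct, and their total number is exactly n − 2. -/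
/-- For a hypertree `Γ = {Γ₁,…,Γ_d}` on `{1,…,n}` (distinct subsets,
each of size ≥ 3, each vertex in at least two of them, satisfying convexity and
normalization), any two distinct `Γ_i, Γ_j` meet in at most 2 points; moreover, for
any choice of two distinguished elements `a1 i ≠ a2 i` in each `Γ_i`, the triples
`{a1 i, a2 i, c}` for `c ∈ Γ_i ∖ {a1 i, a2 i}` are pairwise distinct, and there
are exactly `n − 2` of them. -/
theorem stmt_5 {n d : ℕ} (Γ : Fin d → Finset (Fin n)) (hdist : Function.Injective Γ)
    (hcard : ∀ j, 3 ≤ (Γ j).card)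
    (hcover : ∀ i : Fin n, 2 ≤ (Finset.univ.filter (fun j => i ∈ Γ j)).card)
    (hconvex : ∀ S : Finset (Fin d), S.Nonempty →
      2 + ∑ j ∈ S, ((Γ j).card - 2) ≤ (S.biUnion Γ).card)
    (hnorm : n = 2 + ∑ j, ((Γ j).card - 2))
    (a1 a2 : Fin d → Fin n) (ha1 : ∀ i, a1 i ∈ Γ i) (ha2 : ∀ i, a2 i ∈ Γ i)
    (hne : ∀ i, a1 i ≠ a2 i) :
    (∀ i j : Fin d, i ≠ j → (Γ i ∩ Γ j).card ≤ 2) ∧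
    Set.InjOn (fun p : Fin d × Fin n => ({a1 p.1, a2 p.1, p.2} : Finset (Fin n)))
      ((Finset.univ.filter
        (fun p : Fin d × Fin n => p.2 ∈ Γ p.1 ∧ p.2 ≠ a1 p.1 ∧ p.2 ≠ a2 p.1)) : Set (Fin d × Fin n)) ∧
    (Finset.univ.filter
      (fun p : Fin d × Fin n => p.2 ∈ Γ p.1 ∧ p.2 ≠ a1 p.1 ∧ p.2 ≠ a2 p.1)).card = n - 2 := by
  have key : ∀ i j : Fin d, i ≠ j → (Γ i ∩ Γ j).card ≤ 2 := by
    intro i j hij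
    have h := hconvex {i, j} (by simp)
    rw [Finset.sum_pair hij] at h
    have hb : ({i, j} : Finset (Fin d)).biUnion Γ = Γ i ∪ Γ j := by
      simp [Finset.biUnion_insert]
    rw [hb] at h
    have hu := Finset.card_union_add_card_inter (Γ i) (Γ j)
    have hi := hcard i; have hj := hcard j
    have hle : (Γ i ∪ Γ j).card ≤ (Γ i).card + (Γ j).card := Finset.card_union_le _ _
    omega
  have sub : ∀ (i : Fin d) (c : Fin n), c ∈ Γ i →
      ({a1 i, a2 i, c} : Finset (Fin n)) ⊆ Γ i := by
    intro i c hc x hx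
    simp only [Finset.mem_insert, Finset.mem_singleton] at hx
    rcases hx with rfl | rfl | rfl
    exacts [ha1 i, ha2 i, hc]
  refine ⟨key, ?_, ?_⟩
  · rintro ⟨i, c⟩ hp ⟨j, c'⟩ hq heq
    simp only [Finset.coe_filter, Set.mem_setOf_eq, Finset.mem_univ, true_and] at hp hq
    obtain ⟨hp1, hp2, hp3⟩ := hp
    obtain ⟨hq1, hq2, hq3⟩ := hq
    simp only at heq
    by_cases hij : i = j
    · subst hij
      have hc : c ∈ ({a1 i, a2 i, c'} : Finset (Fin n)) := by
        rw [← heq]; simp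
      simp only [Finset.mem_insert, Finset.mem_singleton] at hc
      rcases hc with h | h | h
      · exact absurd h hp2
      · exact absurd h hp3
      · exact Prod.ext rfl h
    · exfalso
      have h3 : ({a1 i, a2 i, c} : Finset (Fin n)).card = 3 :=
        Finset.card_eq_three.mpr ⟨a1 i, a2 i, c, hne i, Ne.symm hp2, Ne.symm hp3, rfl⟩
      have hsubj : ({a1 i, a2 i, c} : Finset (Fin n)) ⊆ Γ j := by
        rw [heq]; exact sub j c' hq1
      have hle := Finset.card_le_card (Finset.subset_inter (sub i c hp1) hsubj)
      have := key i j hij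
      omega
  · have inner : ∀ i : Fin d,
        (Finset.univ.filter (fun c : Fin n => c ∈ Γ i ∧ c ≠ a1 i ∧ c ≠ a2 i)).card
          = (Γ i).card - 2 := by
      intro i
      have he : Finset.univ.filter (fun c : Fin n => c ∈ Γ i ∧ c ≠ a1 i ∧ c ≠ a2 i)
          = Γ i \ {a1 i, a2 i} := by
        ext x
        simp [and_assoc]
      rw [he, Finset.card_sdiff_of_subset]
      · rw [Finset.card_insert_of_notMem (by simpa using hne i), Finset.card_singleton]
      · intro x hx
        simp only [Finset.mem_insert, Finset.mem_singleton] at hx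
        rcases hx with rfl | rfl
        exacts [ha1 i, ha2 i]
    rw [Finset.card_filter, Fintype.sum_prod_type]
    have : ∀ i : Fin d,
        (∑ c : Fin n, if c ∈ Γ i ∧ c ≠ a1 i ∧ c ≠ a2 i then 1 else 0) = (Γ i).card - 2 := by
      intro i
      rw [← Finset.card_filter]
      exact inner i
    rw [Finset.sum_congr rfl fun i _ => this i]
    omega
end

section
/- Let R be a commutative ring, p ∈ R, and M an m × m matrix over R. Suppose there exist a nonempty subset S of the row indices, a vector v ∈ R^m, and scalars c_i ∈ R for i ∈ S, such that M_{ij} − c_i · v_j lies in the principal ideal (p) for every i ∈ S and every column index j (i.e., modulo p every row indexed by S is a scalar multiple of the single vector v). Then p^{|S|−1} divides det M. -/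
/-- If every row of `B` indexed by `T` has all entries divisible by `p`, then
`p ^ |T|` divides `det B`. -/
lemma aux_det_dvd_rows {R : Type*} [CommRing R] {m : ℕ} (p : R) :
    ∀ (T : Finset (Fin m)) (B : Matrix (Fin m) (Fin m) R),
      (∀ i ∈ T, ∀ j, p ∣ B i j) → p ^ T.card ∣ B.det := by
  intro T
  induction T using Finset.induction_on with
  | empty => simp
  | @insert i T hiT ih =>
    intro B hB
    choose E hE using fun j => hB i (Finset.mem_insert_self i T) j
    have hrow : (p • E) = B i := by
      funext j; exact (hE j).symm
    have hdet : B.det = p * (B.updateRow i E).det := by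
      conv_lhs => rw [← B.updateRow_eq_self i, ← hrow]
      rw [Matrix.det_updateRow_smul]
    rw [hdet, Finset.card_insert_of_notMem hiT, pow_succ, mul_comm (p ^ T.card) p]
    refine mul_dvd_mul dvd_rfl (ih _ ?_)
    intro k hk j
    have hki : k ≠ i := fun h => hiT (h ▸ hk)
    rw [Matrix.updateRow_ne hki]
    exact hB k (Finset.mem_insert_of_mem hk) j

lemma aux_key {R : Type*} [CommRing R] {m : ℕ} (p : R) (v c : Fin m → R) :
    ∀ (S : Finset (Fin m)) (M : Matrix (Fin m) (Fin m) R),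
      (∀ i ∈ S, ∀ j, p ∣ M i j - c i * v j) → p ^ (S.card - 1) ∣ M.det := by
  intro S
  induction S using Finset.strongInduction with
  | _ S ih =>
    intro M hM
    rcases Nat.lt_or_ge S.card 2 with h2 | h2
    · have : S.card - 1 = 0 := by omega
      simp [this]
    · obtain ⟨i0, hi0⟩ : S.Nonempty := by rw [← Finset.card_pos]; omega
      choose E0 hE0 using fun j => hM i0 hi0 j
      have hrow : M i0 = (c i0 • v) + (p • E0) := by
        funext j
        simp only [Pi.add_apply, Pi.smul_apply, smul_eq_mul]
        linear_combination hE0 j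
      have hdet : M.det = c i0 * (M.updateRow i0 v).det + p * (M.updateRow i0 E0).det := by
        conv_lhs => rw [← M.updateRow_eq_self i0, hrow]
        rw [Matrix.det_updateRow_add, Matrix.det_updateRow_smul, Matrix.det_updateRow_smul]
      rw [hdet]
      apply dvd_add
      · apply Dvd.dvd.mul_left
        set A := M.updateRow i0 v with hA
        set B : Matrix (Fin m) (Fin m) R :=
          fun i j => if i ∈ S.erase i0 then M i j - c i * v j else A i j with hBdef
        set c' : Fin m → R := fun i => if i ∈ S.erase i0 then c i else 0 with hc'
        have hAB : A.det = B.det := by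
          apply Matrix.det_eq_of_forall_row_eq_smul_add_const c' i0
          · simp [hc']
          · intro i j
            by_cases hi : i ∈ S.erase i0
            · have hne : i ≠ i0 := (Finset.mem_erase.mp hi).1
              have hBi0 : B i0 j = v j := by
                simp [hBdef, hA, Finset.notMem_erase, Matrix.updateRow_self]
              rw [hBi0]
              simp only [hBdef, hc', if_pos hi, hA, Matrix.updateRow_ne hne]
              ring
            · simp only [hBdef, hc', if_neg hi, zero_mul, add_zero]
        rw [hAB]
        have hcard : S.card - 1 = (S.erase i0).card := by
          rw [Finset.card_erase_of_mem hi0]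
        rw [hcard]
        apply aux_det_dvd_rows
        intro i hi j
        simp only [hBdef, if_pos hi]
        exact hM i (Finset.mem_of_mem_erase hi) j
      · have hsub : S.erase i0 ⊂ S := Finset.erase_ssubset hi0
        have hrows : ∀ i ∈ S.erase i0, ∀ j,
            p ∣ (M.updateRow i0 E0) i j - c i * v j := by
          intro i hi j
          rw [Matrix.updateRow_ne (Finset.mem_erase.mp hi).1]
          exact hM i (Finset.mem_of_mem_erase hi) j
        have := ih (S.erase i0) hsub (M.updateRow i0 E0) hrows
        have hcard : (S.erase i0).card - 1 = S.card - 2 := by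
          rw [Finset.card_erase_of_mem hi0]; omega
        rw [hcard] at this
        have : p ^ (S.card - 1) ∣ p * (M.updateRow i0 E0).det := by
          have h1 : S.card - 1 = 1 + (S.card - 2) := by omega
          rw [h1, pow_add, pow_one]
          exact mul_dvd_mul dvd_rfl this
        exact this

/-- If, modulo a principal ideal `(p)` of a commutative ring, every
row of a square matrix `M` indexed by a nonempty set `S` is a scalar multiple
(`c i`) of one fixed vector `v`, then `p ^ (|S| − 1)` divides `det M`. -/
theorem stmt_6 {R : Type*} [CommRing R] {m : ℕ} (p : R) (M : Matrix (Fin m) (Fin m) R)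
    (S : Finset (Fin m)) (hS : S.Nonempty) (v : Fin m → R) (c : Fin m → R)
    (h : ∀ i ∈ S, ∀ j, M i j - c i * v j ∈ Ideal.span {p}) :
    p ^ (S.card - 1) ∣ M.det := by
  exact aux_key p v c S M fun i hi j => (Ideal.mem_span_singleton).mp (h i hi j)
end

section
/- With A and B as constructed in the context, for every i ∈ {1, …, d} the polynomial (x_{a_{i1}} − x_{a_{i2}})^{k_i − 3} divides det B in k[x_1, …, x_n]. -/
open MvPolynomial

/-- The `(n−2) × n` matrix `A` built from a hypertree: rows are indexed by pairs
`(i, j)` with `1 ≤ i ≤ d` and `3 ≤ j ≤ k_i` (here 0-indexed: `2 ≤ j`); the row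
`(i, j)` has entry `x_{a_{i2}} − x_{a_{ij}}` in column `a_{i1}`, entry
`x_{a_{ij}} − x_{a_{i1}}` in column `a_{i2}`, entry `x_{a_{i1}} − x_{a_{i2}}` in
column `a_{ij}`, and `0` elsewhere. -/
noncomputable def Amat {K : Type*} [Field K] {n d : ℕ} (kk : Fin d → ℕ)
    (hk : ∀ i, 3 ≤ kk i) (a : (i : Fin d) → Fin (kk i) → Fin n) :
    Matrix (Σ i : Fin d, {j : Fin (kk i) // 2 ≤ (j : ℕ)}) (Fin n) (MvPolynomial (Fin n) K) :=
  fun p c =>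
    if c = a p.1 ⟨0, by have := hk p.1; omega⟩ then
      X (a p.1 ⟨1, by have := hk p.1; omega⟩) - X (a p.1 p.2.1)
    else if c = a p.1 ⟨1, by have := hk p.1; omega⟩ then
      X (a p.1 p.2.1) - X (a p.1 ⟨0, by have := hk p.1; omega⟩)
    else if c = a p.1 p.2.1 then
      X (a p.1 ⟨0, by have := hk p.1; omega⟩) - X (a p.1 ⟨1, by have := hk p.1; omega⟩)
    else 0


open Matrix

private lemma det_dvd_rows_smul {R : Type*} [CommRing R] {m : Type*} [DecidableEq m]
    [Fintype m] (t : R) (S : Finset m) :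
    ∀ (M : Matrix m m R), (∀ p ∈ S, ∃ u : m → R, M p = t • u) → t ^ S.card ∣ M.det := by
  induction S using Finset.induction with
  | empty => simp
  | @insert p S hp ih =>
    intro M h
    obtain ⟨u, hu⟩ := h p (Finset.mem_insert_self p S)
    have hM : M = M.updateRow p (t • u) := by rw [← hu, Matrix.updateRow_eq_self]
    rw [Finset.card_insert_of_notMem hp, hM, Matrix.det_updateRow_smul]
    obtain ⟨c, hc⟩ := ih (M.updateRow p u) (fun q hq => by
      rw [Matrix.updateRow_ne (fun h' : _ = p => hp (h' ▸ hq))]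
      exact h q (Finset.mem_insert_of_mem hq))
    exact ⟨c, by rw [hc]; ring⟩

private lemma det_dvd_rows_aux {R : Type*} [CommRing R] {m : Type*} [DecidableEq m]
    [Fintype m] (t : R) (w : m → R) (S : Finset m) :
    ∀ (M : Matrix m m R) (q : m), q ∉ S → M q = w →
      (∀ p ∈ S, ∃ (c : R) (u : m → R), M p = c • w + t • u) → t ^ S.card ∣ M.det := by
  induction S using Finset.induction with
  | empty => simp
  | @insert p S hp ih =>
    intro M q hq hqw h
    have hqp : q ≠ p := fun h' => hq (h' ▸ Finset.mem_insert_self p S)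
    obtain ⟨c, u, hu⟩ := h p (Finset.mem_insert_self p S)
    have hM : M = M.updateRow p (c • w + t • u) := by rw [← hu, Matrix.updateRow_eq_self]
    rw [Finset.card_insert_of_notMem hp, hM, Matrix.det_updateRow_add,
      Matrix.det_updateRow_smul, Matrix.det_updateRow_smul]
    have hz : (M.updateRow p w).det = 0 := by
      apply Matrix.det_zero_of_row_eq hqp
      rw [Matrix.updateRow_ne hqp, Matrix.updateRow_self, hqw]
    rw [hz, mul_zero, zero_add]
    obtain ⟨cc, hcc⟩ := ih (M.updateRow p u) q (fun h' => hq (Finset.mem_insert_of_mem h'))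
      (by rw [Matrix.updateRow_ne hqp]; exact hqw)
      (fun q' hq' => by
        rw [Matrix.updateRow_ne (fun h' : _ = p => hp (h' ▸ hq'))]
        exact h q' (Finset.mem_insert_of_mem hq'))
    exact ⟨cc, by rw [hcc]; ring⟩

private lemma det_dvd_rows_form {R : Type*} [CommRing R] {m : Type*} [DecidableEq m]
    [Fintype m] (t : R) (w : m → R) (S : Finset m) :
    ∀ (M : Matrix m m R), (∀ p ∈ S, ∃ (c : R) (u : m → R), M p = c • w + t • u) →
      t ^ (S.card - 1) ∣ M.det := by
  induction S using Finset.induction with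
  | empty => simp
  | @insert p S hp ih =>
    intro M h
    obtain ⟨c, u, hu⟩ := h p (Finset.mem_insert_self p S)
    have hM : M = M.updateRow p (c • w + t • u) := by rw [← hu, Matrix.updateRow_eq_self]
    rw [Finset.card_insert_of_notMem hp, hM, Matrix.det_updateRow_add,
      Matrix.det_updateRow_smul, Matrix.det_updateRow_smul]
    have h1 : t ^ S.card ∣ (M.updateRow p w).det := by
      apply det_dvd_rows_aux t w S _ p hp (Matrix.updateRow_self)
      intro q' hq'
      rw [Matrix.updateRow_ne (fun h' : _ = p => hp (h' ▸ hq'))]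
      exact h q' (Finset.mem_insert_of_mem hq')
    have h2 : t ^ (S.card - 1) ∣ (M.updateRow p u).det := by
      apply ih
      intro q' hq'
      rw [Matrix.updateRow_ne (fun h' : _ = p => hp (h' ▸ hq'))]
      exact h q' (Finset.mem_insert_of_mem hq')
    have : Nat.succ S.card - 1 = S.card := rfl
    rw [this]
    refine dvd_add (Dvd.dvd.mul_left h1 c) ?_
    obtain ⟨cc, hcc⟩ := h2
    exact dvd_trans (pow_dvd_pow t (show S.card ≤ S.card - 1 + 1 by omega))
      ⟨cc, by rw [hcc]; ring⟩

private lemma det_dvd_rows_smul' {R : Type*} [CommRing R] {m : Type*} [DecidableEq m]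
    [Fintype m] (t : R) {ι : Type*} [Fintype ι] [DecidableEq ι] (f : ι → m)
    (hf : Function.Injective f) (M : Matrix m m R)
    (h : ∀ x, ∃ u : m → R, M (f x) = t • u) : t ^ Fintype.card ι ∣ M.det := by
  have := det_dvd_rows_smul t (Finset.univ.image f) M (fun p hp => by
    obtain ⟨x, _, rfl⟩ := Finset.mem_image.mp hp
    exact h x)
  rwa [Finset.card_image_of_injective _ hf, Finset.card_univ] at this

private lemma det_dvd_rows_form' {R : Type*} [CommRing R] {m : Type*} [DecidableEq m]
    [Fintype m] (t : R) (w : m → R) {ι : Type*} [Fintype ι] [DecidableEq ι] (f : ι → m)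
    (hf : Function.Injective f) (M : Matrix m m R)
    (h : ∀ x, ∃ (c : R) (u : m → R), M (f x) = c • w + t • u) : t ^ (Fintype.card ι - 1) ∣ M.det := by
  have := det_dvd_rows_form t w (Finset.univ.image f) M (fun p hp => by
    obtain ⟨x, _, rfl⟩ := Finset.mem_image.mp hp
    exact h x)
  rwa [Finset.card_image_of_injective _ hf, Finset.card_univ] at this

private lemma card_fin_two_le (N : ℕ) :
    Fintype.card {j : Fin N // 2 ≤ (j : ℕ)} = N - 2 := by
  have eqv : {j : Fin N // 2 ≤ (j : ℕ)} ≃ Fin (N - 2) :=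
    { toFun := fun j => ⟨(j : ℕ) - 2, by have := j.1.isLt; have := j.2; omega⟩
      invFun := fun k => ⟨⟨(k : ℕ) + 2, by have := k.isLt; omega⟩, by simp⟩
      left_inv := fun j => Subtype.ext (Fin.ext (by have := j.2; simp; omega))
      right_inv := fun k => Fin.ext (by simp) }
  rw [Fintype.card_congr eqv, Fintype.card_fin]


/-- with `A` as above (subsets `Γ_i = {a_{i1},…,a_{ik_i}}` of
`{1,…,n}`, `k_i ≥ 3`, `Σ (k_i − 2) = n − 2`, with the triples
`{a_{i1}, a_{i2}, a_{ij}}` pairwise distinct), and `B` the `(n−3) × (n−3)` matrix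
obtained from `A` by deleting one row `r0 = (i₀, j₀)` and the three columns
`a_{i₀1}, a_{i₀2}, a_{i₀j₀}` (any bijective ordering `e` of the remaining rows
against the remaining columns), for every `i` the polynomial
`(x_{a_{i1}} − x_{a_{i2}})^{k_i − 3}` divides `det B`. -/
theorem stmt_7 {K : Type*} [Field K] {n d : ℕ} (hn : 4 ≤ n)
    (kk : Fin d → ℕ) (hk : ∀ i, 3 ≤ kk i)
    (a : (i : Fin d) → Fin (kk i) → Fin n) (hinj : ∀ i, Function.Injective (a i))
    (hsum : ∑ i, (kk i - 2) = n - 2)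
    (htrip : Function.Injective fun p : Σ i : Fin d, {j : Fin (kk i) // 2 ≤ (j : ℕ)} =>
      ({a p.1 ⟨0, by have := hk p.1; omega⟩, a p.1 ⟨1, by have := hk p.1; omega⟩,
        a p.1 p.2.1} : Finset (Fin n)))
    (r0 : Σ i : Fin d, {j : Fin (kk i) // 2 ≤ (j : ℕ)})
    (e : {p : Σ i : Fin d, {j : Fin (kk i) // 2 ≤ (j : ℕ)} // p ≠ r0} ≃
      {c : Fin n // c ≠ a r0.1 ⟨0, by have := hk r0.1; omega⟩ ∧
        c ≠ a r0.1 ⟨1, by have := hk r0.1; omega⟩ ∧ c ≠ a r0.1 r0.2.1})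
    (i : Fin d) :
    (X (a i ⟨0, by have := hk i; omega⟩) - X (a i ⟨1, by have := hk i; omega⟩) :
        MvPolynomial (Fin n) K) ^ (kk i - 3) ∣
      Matrix.det ((Amat (K := K) kk hk a).submatrix (fun p => p.1) (fun p => (e p).1)) := by
  classical
  have hk3 : 3 ≤ kk i := hk i
  have hk0 : 0 < kk i := by omega
  have hk1 : 1 < kk i := by omega
  obtain ⟨i1, j1⟩ := r0
  by_cases hcase : i = i1
  · subst hcase
    -- the three forbidden columns for the surviving rows in group i
    have hcard : Fintype.card {j : {j : Fin (kk i) // 2 ≤ (j : ℕ)} // j ≠ j1} = kk i - 3 := by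
      have h := Fintype.card_subtype_compl (fun j : {j : Fin (kk i) // 2 ≤ (j : ℕ)} => j = j1)
      rw [Fintype.card_subtype_eq, card_fin_two_le] at h
      exact h.trans (by omega)
    have hfinj : Function.Injective (fun x : {j : {j : Fin (kk i) // 2 ≤ (j : ℕ)} // j ≠ j1} =>
        (⟨⟨i, x.1⟩, fun hEq => x.2 (by simpa using hEq)⟩ :
          {p : Σ i' : Fin d, {j : Fin (kk i') // 2 ≤ (j : ℕ)} // p ≠ ⟨i, j1⟩})) := by
      intro x y hxy
      apply Subtype.ext
      have := congrArg Subtype.val hxy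
      simpa using this
    have hmain := det_dvd_rows_smul'
      (X (a i ⟨0, hk0⟩) - X (a i ⟨1, hk1⟩) : MvPolynomial (Fin n) K)
      _ hfinj ((Amat (K := K) kk hk a).submatrix (fun p => p.1) (fun p => (e p).1))
      (fun x => by
        refine ⟨fun c => if (e c).1 = a i x.1.1 then 1 else 0, ?_⟩
        funext c
        have h0 : (e c).1 ≠ a i ⟨0, hk0⟩ := (e c).2.1
        have h1 : (e c).1 ≠ a i ⟨1, hk1⟩ := (e c).2.2.1
        show (if (e c).1 = a i ⟨0, hk0⟩ then X (a i ⟨1, hk1⟩) - X (a i x.1.1)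
          else if (e c).1 = a i ⟨1, hk1⟩ then X (a i x.1.1) - X (a i ⟨0, hk0⟩)
          else if (e c).1 = a i x.1.1 then X (a i ⟨0, hk0⟩) - X (a i ⟨1, hk1⟩)
          else 0 : MvPolynomial (Fin n) K)
          = (X (a i ⟨0, hk0⟩) - X (a i ⟨1, hk1⟩)) *
            (if (e c).1 = a i x.1.1 then 1 else 0)
        rw [if_neg h0, if_neg h1]
        split_ifs <;> ring)
    rw [hcard] at hmain
    exact hmain
  · have hfinj : Function.Injective (fun x : {j : Fin (kk i) // 2 ≤ (j : ℕ)} =>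
        (⟨⟨i, x⟩, fun hEq => hcase (congrArg Sigma.fst hEq)⟩ :
          {p : Σ i' : Fin d, {j : Fin (kk i') // 2 ≤ (j : ℕ)} // p ≠ ⟨i1, j1⟩})) := by
      intro x y hxy
      have := congrArg Subtype.val hxy
      simpa using this
    have hne01 : a i ⟨0, hk0⟩ ≠ a i ⟨1, hk1⟩ := fun h => by
      have h2 := hinj i h
      have : (0 : ℕ) = (1 : ℕ) := congrArg Fin.val h2
      omega
    have hmain := det_dvd_rows_form'
      (X (a i ⟨0, hk0⟩) - X (a i ⟨1, hk1⟩) : MvPolynomial (Fin n) K)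
      (fun c => if (e c).1 = a i ⟨0, hk0⟩ then 1
        else if (e c).1 = a i ⟨1, hk1⟩ then -1 else 0)
      _ hfinj ((Amat (K := K) kk hk a).submatrix (fun p => p.1) (fun p => (e p).1))
      (fun x => by
        have hne0x : a i ⟨0, hk0⟩ ≠ a i x.1 := fun h => by
          have h2 := hinj i h
          have h3 : (0 : ℕ) = (x.1 : ℕ) := congrArg Fin.val h2
          have := x.2; omega
        have hne1x : a i ⟨1, hk1⟩ ≠ a i x.1 := fun h => by
          have h2 := hinj i h
          have h3 : (1 : ℕ) = (x.1 : ℕ) := congrArg Fin.val h2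
          have := x.2; omega
        refine ⟨X (a i ⟨0, hk0⟩) - X (a i x.1),
          fun c => if (e c).1 = a i x.1 then 1
            else if (e c).1 = a i ⟨0, hk0⟩ then -1 else 0, ?_⟩
        funext c
        simp only [Pi.add_apply, Pi.smul_apply, smul_eq_mul]
        show (if (e c).1 = a i ⟨0, hk0⟩ then X (a i ⟨1, hk1⟩) - X (a i x.1)
          else if (e c).1 = a i ⟨1, hk1⟩ then X (a i x.1) - X (a i ⟨0, hk0⟩)
          else if (e c).1 = a i x.1 then X (a i ⟨0, hk0⟩) - X (a i ⟨1, hk1⟩)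
          else 0)
          = (X (a i ⟨0, hk0⟩) - X (a i x.1)) *
              (if (e c).1 = a i ⟨0, hk0⟩ then 1
                else if (e c).1 = a i ⟨1, hk1⟩ then -1 else 0)
            + (X (a i ⟨0, hk0⟩) - X (a i ⟨1, hk1⟩)) *
              (if (e c).1 = a i x.1 then 1
                else if (e c).1 = a i ⟨0, hk0⟩ then -1 else 0)
        split_ifs <;> first
          | ring1
          | simp_all)
    rw [card_fin_two_le] at hmain
    have h3 : kk i - 2 - 1 = kk i - 3 := by omega
    rw [h3] at hmain
    exact hmain
end

section
/- Let J ⊆ {1, …, n+2} with n+1 ∈ J, n+2 ∈ J and |J| ≥ 3, and set m = Σ_{i ∈ J, i ≤ n} |a_i|. Then F ∈ P_J^m and F ∉ P_J^{m+1}; that is, the multiplicity of F along the partial diagonal indexed by J is exactly Σ_{i ∈ J ∩ {1,…,n}} |a_i|. -/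
open MvPolynomial

lemma prod_mem_pow_sum {R ι : Type*} [CommRing R] (I : Ideal R) (s : Finset ι)
    (f : ι → R) (m : ι → ℕ) (h : ∀ i ∈ s, f i ∈ I ^ m i) :
    (∏ i ∈ s, f i) ∈ I ^ (∑ i ∈ s, m i) := by
  classical
  induction s using Finset.induction with
  | empty => simp
  | @insert x s hx ih =>
    rw [Finset.prod_insert hx, Finset.sum_insert hx, pow_add]
    exact Ideal.mul_mem_mul (h _ (Finset.mem_insert_self _ _))
      (ih fun i hi => h i (Finset.mem_insert_of_mem hi))

noncomputable def sigCC (k : Type*) [Field k] {n : ℕ} (a : Fin n → ℤ)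
    (J : Finset (Fin (n + 2))) : Fin (n + 2) → Polynomial k :=
  fun j => if j ∈ J then
      (if h : (j : ℕ) < n then (if 0 < a ⟨j, h⟩ then Polynomial.X else 0) else
        (if (j : ℕ) = n then 0 else Polynomial.X))
    else 1

lemma sigCC_q1 (k : Type*) [Field k] {n : ℕ} (a : Fin n → ℤ)
    (J : Finset (Fin (n + 2))) (h : n < n + 2) (hq : (⟨n, h⟩ : Fin (n+2)) ∈ J) :
    sigCC k a J ⟨n, h⟩ = 0 := by
  rw [sigCC, if_pos hq, dif_neg (by simp), if_pos (by simp)]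

lemma sigCC_q2 (k : Type*) [Field k] {n : ℕ} (a : Fin n → ℤ)
    (J : Finset (Fin (n + 2))) (h : n + 1 < n + 2) (hq : (⟨n + 1, h⟩ : Fin (n+2)) ∈ J) :
    sigCC k a J ⟨n + 1, h⟩ = Polynomial.X := by
  rw [sigCC, if_pos hq, dif_neg (by simp), if_neg (by simp)]

lemma sigCC_cast (k : Type*) [Field k] {n : ℕ} (a : Fin n → ℤ)
    (J : Finset (Fin (n + 2))) (i : Fin n) :
    sigCC k a J (Fin.castAdd 2 i) =
      if Fin.castAdd 2 i ∈ J then (if 0 < a i then Polynomial.X else 0) else 1 := by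
  by_cases hi : Fin.castAdd 2 i ∈ J
  · rw [sigCC, if_pos hi, if_pos hi,
      dif_pos (show ((Fin.castAdd 2 i : Fin (n + 2)) : ℕ) < n by simpa using i.isLt)]
    simp only [Fin.coe_castAdd, Fin.eta]
  · rw [sigCC, if_neg hi, if_neg hi]


/-- The Chen–Coskun polynomial
`F = ∏_{aᵢ>0}(p_{n+1}−pᵢ)^{aᵢ} ∏_{aᵢ<0}(p_{n+2}−pᵢ)^{−aᵢ}
   − ∏_{aᵢ<0}(p_{n+1}−pᵢ)^{−aᵢ} ∏_{aᵢ>0}(p_{n+2}−pᵢ)^{aᵢ}`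
in `k[p₁,…,p_{n+2}]`. Variables are 0-indexed: `pᵢ = X (Fin.castAdd 2 i)` for
`i : Fin n`, `p_{n+1} = X ⟨n, _⟩`, `p_{n+2} = X ⟨n+1, _⟩`; the exponent
`(a i).toNat` vanishes when `a i < 0` and `(-a i).toNat` vanishes when
`a i > 0`, so the products are exactly those of the paper. -/
noncomputable def Fpoly (k : Type*) [Field k] (n : ℕ) (a : Fin n → ℤ) :
    MvPolynomial (Fin (n + 2)) k :=
  (∏ i, (X (⟨n, by omega⟩ : Fin (n + 2)) - X (Fin.castAdd 2 i)) ^ (a i).toNat) *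
      (∏ i, (X (⟨n + 1, by omega⟩ : Fin (n + 2)) - X (Fin.castAdd 2 i)) ^ (-a i).toNat) -
    (∏ i, (X (⟨n, by omega⟩ : Fin (n + 2)) - X (Fin.castAdd 2 i)) ^ (-a i).toNat) *
      (∏ i, (X (⟨n + 1, by omega⟩ : Fin (n + 2)) - X (Fin.castAdd 2 i)) ^ (a i).toNat)

/-- The ideal `P_J` of `k[p₁,…,p_{n+2}]` generated by the linear forms
`pᵢ − pⱼ` for `i, j ∈ J`; the multiplicity of a polynomial along the partial
diagonal indexed by `J` is the largest `m` with the polynomial in `P_J ^ m`. -/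
noncomputable def Pideal (k : Type*) [Field k] (n : ℕ) (J : Finset (Fin (n + 2))) :
    Ideal (MvPolynomial (Fin (n + 2)) k) :=
  Ideal.span {f | ∃ i ∈ J, ∃ j ∈ J, f = X i - X j}

set_option maxRecDepth 4000

/-- for `J ⊆ {1,…,n+2}` containing both `n+1` and `n+2` with
`|J| ≥ 3`, the multiplicity of `F` along the partial diagonal indexed by `J`
is exactly `m = Σ_{i ∈ J ∩ {1,…,n}} |aᵢ|`: `F ∈ P_J ^ m` and `F ∉ P_J ^ (m+1)`. -/
theorem stmt_10 {k : Type*} [Field k] [CharZero k] {n : ℕ} (hn : 3 ≤ n)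
    (a : Fin n → ℤ) (hsum : ∑ i, a i = 0) (hgcd : Finset.univ.gcd a = 1)
    (hnz : ∀ i, a i ≠ 0)
    (J : Finset (Fin (n + 2)))
    (hq1 : (⟨n, by omega⟩ : Fin (n + 2)) ∈ J)
    (hq2 : (⟨n + 1, by omega⟩ : Fin (n + 2)) ∈ J)
    (hJ : 3 ≤ J.card) :
    Fpoly k n a ∈ (Pideal k n J) ^
        (∑ i ∈ Finset.univ.filter (fun i : Fin n => Fin.castAdd 2 i ∈ J), (a i).natAbs) ∧
    Fpoly k n a ∉ (Pideal k n J) ^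
        ((∑ i ∈ Finset.univ.filter (fun i : Fin n => Fin.castAdd 2 i ∈ J), (a i).natAbs) + 1) := by
  classical
  set m : ℕ := ∑ i ∈ Finset.univ.filter (fun i : Fin n => Fin.castAdd 2 i ∈ J), (a i).natAbs
    with hm
  have hmupto : m = ∑ i : Fin n, (if Fin.castAdd 2 i ∈ J then (a i).natAbs else 0) := by
    rw [hm, Finset.sum_filter]
  -- generators
  have hgen : ∀ (i : Fin n), Fin.castAdd 2 i ∈ J → ∀ q ∈ J,
      (X q - X (Fin.castAdd 2 i) : MvPolynomial (Fin (n + 2)) k) ∈ Pideal k n J := by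
    intro i hi q hq
    exact Ideal.subset_span ⟨q, hq, _, hi, rfl⟩
  have key : ∀ (hq : n < n + 2) (hq' : n + 1 < n + 2), (⟨n, hq⟩ : Fin (n+2)) ∈ J →
      (⟨n + 1, hq'⟩ : Fin (n+2)) ∈ J →
      ∀ b c : Fin n → ℕ, (∀ i, b i + c i = (a i).natAbs) →
      (∏ i, (X (⟨n, hq⟩ : Fin (n + 2)) - X (Fin.castAdd 2 i)) ^ (b i)) *
        (∏ i, (X (⟨n + 1, hq'⟩ : Fin (n + 2)) - X (Fin.castAdd 2 i)) ^ (c i)) ∈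
        Pideal k n J ^ m := by
    intro hq hq' h1 h2 b c hbc
    rw [← Finset.prod_mul_distrib, hmupto]
    refine prod_mem_pow_sum _ _ _ _ (fun i _ => ?_)
    by_cases hi : Fin.castAdd 2 i ∈ J
    · rw [if_pos hi, ← hbc i, pow_add]
      exact Ideal.mul_mem_mul (Ideal.pow_mem_pow (hgen i hi _ h1) _)
        (Ideal.pow_mem_pow (hgen i hi _ h2) _)
    · rw [if_neg hi, pow_zero]
      simp
  constructor
  · unfold Fpoly
    exact sub_mem
      (key (by omega) (by omega) hq1 hq2 _ _ (fun i => by omega))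
      (key (by omega) (by omega) hq1 hq2 _ _ (fun i => by omega))

  · -- non-membership
    intro hFm
    have hzero : ((aeval (sigCC k a J)) (Fpoly k n a)).coeff m = 0 := by
      have hσJ : ∀ j ∈ J, sigCC k a J j ∈ Ideal.span {(Polynomial.X : Polynomial k)} := by
        intro j hj
        rw [sigCC, if_pos hj]
        split_ifs
        · exact Ideal.subset_span rfl
        · exact Ideal.zero_mem _
        · exact Ideal.zero_mem _
        · exact Ideal.subset_span rfl
      have hmap : Ideal.map (aeval (sigCC k a J) : MvPolynomial (Fin (n + 2)) k →ₐ[k] Polynomial k)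
          (Pideal k n J) ≤ Ideal.span {(Polynomial.X : Polynomial k)} := by
        rw [Pideal, Ideal.map_span, Ideal.span_le]
        rintro f ⟨g, ⟨i, hi, j, hj, rfl⟩, rfl⟩
        simp only [map_sub, aeval_X]
        exact sub_mem (hσJ i hi) (hσJ j hj)
      have h1 : (aeval (sigCC k a J)) (Fpoly k n a) ∈
          Ideal.span {(Polynomial.X : Polynomial k) ^ (m + 1)} := by
        rw [← Ideal.span_singleton_pow]
        exact Ideal.pow_right_mono hmap (m + 1)
          (Ideal.map_pow (aeval (sigCC k a J) : MvPolynomial (Fin (n + 2)) k →ₐ[k] Polynomial k)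
            (Pideal k n J) (m + 1) ▸ Ideal.mem_map_of_mem _ hFm)
      rw [Ideal.mem_span_singleton] at h1
      obtain ⟨g, hg⟩ := h1
      rw [hg, mul_comm, Polynomial.coeff_mul_X_pow']
      simp
    -- compute the image of F
    have hφF : (aeval (sigCC k a J)) (Fpoly k n a) =
        (∏ i, (-(sigCC k a J (Fin.castAdd 2 i))) ^ (a i).toNat) *
            (∏ i, (Polynomial.X - sigCC k a J (Fin.castAdd 2 i)) ^ (-a i).toNat) -
          (∏ i, (-(sigCC k a J (Fin.castAdd 2 i))) ^ (-a i).toNat) *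
            (∏ i, (Polynomial.X - sigCC k a J (Fin.castAdd 2 i)) ^ (a i).toNat) := by
      simp only [Fpoly, map_sub, map_mul, map_prod, map_pow, aeval_X,
        sigCC_q1 k a J (by omega) hq1, sigCC_q2 k a J (by omega) hq2, zero_sub]
    -- the second big product vanishes
    obtain ⟨i0, hi0⟩ : ∃ i : Fin n, Fin.castAdd 2 i ∈ J := by
      have hmem2 : (⟨n + 1, by omega⟩ : Fin (n + 2)) ∈ J.erase ⟨n, by omega⟩ :=
        Finset.mem_erase.mpr ⟨by simp [Fin.ext_iff], hq2⟩
      have h2 : ((J.erase ⟨n, by omega⟩).erase ⟨n + 1, by omega⟩).Nonempty := by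
        rw [← Finset.card_pos, Finset.card_erase_of_mem hmem2,
          Finset.card_erase_of_mem hq1]
        omega
      obtain ⟨j, hj⟩ := h2
      rw [Finset.mem_erase, Finset.mem_erase] at hj
      obtain ⟨hj2, hj1, hjJ⟩ := hj
      have hlt : (j : ℕ) < n := by
        have h3 := j.isLt
        by_contra hge
        rcases (show (j : ℕ) = n ∨ (j : ℕ) = n + 1 by omega) with h | h
        · exact hj1 (Fin.ext h)
        · exact hj2 (Fin.ext h)
      have hcast : Fin.castAdd 2 (⟨(j : ℕ), hlt⟩ : Fin n) = j := Fin.ext (by simp)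
      exact ⟨⟨(j : ℕ), hlt⟩, by rw [hcast]; exact hjJ⟩
    have hT2 : (∏ i, (-(sigCC k a J (Fin.castAdd 2 i))) ^ (-a i).toNat) *
        (∏ i, (Polynomial.X - sigCC k a J (Fin.castAdd 2 i)) ^ (a i).toNat) = 0 := by
      rw [← Finset.prod_mul_distrib]
      refine Finset.prod_eq_zero (Finset.mem_univ i0) ?_
      rw [sigCC_cast, if_pos hi0]
      rcases (hnz i0).lt_or_gt with h | h
      · have h' : ¬ 0 < a i0 := by omega
        have h1 : (-a i0).toNat ≠ 0 := by omega
        simp [h', zero_pow h1]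
      · have h1 : (a i0).toNat ≠ 0 := by omega
        simp [h, sub_self, zero_pow h1]
    -- the first big product
    have hT1 : (∏ i, (-(sigCC k a J (Fin.castAdd 2 i))) ^ (a i).toNat) *
        (∏ i, (Polynomial.X - sigCC k a J (Fin.castAdd 2 i)) ^ (-a i).toNat) =
        Polynomial.C (∏ i, (-1 : k) ^ (a i).toNat) *
          (Polynomial.X ^ m *
            ∏ i, (if Fin.castAdd 2 i ∈ J then 1
              else (Polynomial.X - 1) ^ (-a i).toNat)) := by
      rw [← Finset.prod_mul_distrib]
      have hterm : ∀ i ∈ Finset.univ, (-(sigCC k a J (Fin.castAdd 2 i))) ^ (a i).toNat *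
          (Polynomial.X - sigCC k a J (Fin.castAdd 2 i)) ^ (-a i).toNat =
          Polynomial.C ((-1 : k) ^ (a i).toNat) *
            (Polynomial.X ^ (if Fin.castAdd 2 i ∈ J then (a i).natAbs else 0) *
              (if Fin.castAdd 2 i ∈ J then 1
                else (Polynomial.X - 1) ^ (-a i).toNat)) := by
        intro i _
        rw [map_pow, map_neg, map_one, sigCC_cast]
        by_cases hi : Fin.castAdd 2 i ∈ J
        · rcases (hnz i).lt_or_gt with h | h
          · have h' : ¬ 0 < a i := by omega
            have e1 : (a i).toNat = 0 := by omega
            have e2 : (a i).natAbs = (-a i).toNat := by omega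
            simp [hi, h', e1, e2]
          · have e1 : (-a i).toNat = 0 := by omega
            have e2 : (a i).natAbs = (a i).toNat := by omega
            have hnp : (-(Polynomial.X : Polynomial k)) ^ (a i).toNat =
                (-1 : Polynomial k) ^ (a i).toNat * Polynomial.X ^ (a i).toNat := by
              rw [neg_pow]
            simp [hi, h, e1, e2, sub_self, hnp]
        · simp [hi]
      rw [Finset.prod_congr rfl hterm, Finset.prod_mul_distrib, Finset.prod_mul_distrib,
        ← map_prod,
        Finset.prod_pow_eq_pow_sum Finset.univ
          (fun i : Fin n => if Fin.castAdd 2 i ∈ J then (a i).natAbs else 0) Polynomial.X,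
        ← hmupto]
    -- coefficient m of the image of F
    have hC : ((aeval (sigCC k a J)) (Fpoly k n a)).coeff m =
        (∏ i, (-1 : k) ^ (a i).toNat) *
          Polynomial.eval 0 (∏ i, (if Fin.castAdd 2 i ∈ J then 1
            else (Polynomial.X - 1) ^ (-a i).toNat)) := by
      rw [hφF, hT2, sub_zero, hT1, Polynomial.coeff_C_mul]
      congr 1
      have h0 := Polynomial.coeff_X_pow_mul
        (∏ i, (if Fin.castAdd 2 i ∈ J then 1
          else (Polynomial.X - 1) ^ (-a i).toNat : Polynomial k)) m 0
      rw [zero_add] at h0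
      rw [h0, Polynomial.coeff_zero_eq_eval_zero]
    have hne : (∏ i, (-1 : k) ^ (a i).toNat) *
        Polynomial.eval 0 (∏ i, (if Fin.castAdd 2 i ∈ J then 1
          else (Polynomial.X - 1) ^ (-a i).toNat : Polynomial k)) ≠ 0 := by
      apply mul_ne_zero
      · exact Finset.prod_ne_zero_iff.mpr fun i _ =>
          pow_ne_zero _ (neg_ne_zero.mpr one_ne_zero)
      · rw [Polynomial.eval_prod]
        refine Finset.prod_ne_zero_iff.mpr fun i _ => ?_
        by_cases hi : Fin.castAdd 2 i ∈ J
        · simp [hi]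
        · rw [if_neg hi]
          simp only [Polynomial.eval_pow, Polynomial.eval_sub, Polynomial.eval_X,
            Polynomial.eval_one, zero_sub]
          exact pow_ne_zero _ (neg_ne_zero.mpr one_ne_zero)
    rw [hC] at hzero
    exact hne hzero
end

section
/- Let J ⊆ {1, …, n} with |J| ≥ 2 (so J contains neither n+1 nor n+2). If J ≠ {1, …, n}, then F ∉ P_J, i.e., the multiplicity of F along the partial diagonal indexed by J is 0. If J = {1, …, n}, then F ∈ P_J but F ∉ P_J^2, i.e., the multiplicity is exactly 1. -/
open MvPolynomial TrivSqZeroExt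

local notation "ε" => DualNumber.eps

section DN
variable {k : Type*} [Field k]

lemma eps2 (c d : k) : (c • (ε : DualNumber k)) * (d • ε) = 0 := by
  rw [smul_mul_assoc, mul_smul_comm, DualNumber.eps_mul_eps, smul_zero, smul_zero]

lemma one_add_mul_one_add (c d : k) :
    ((1 : DualNumber k) + c • ε) * (1 + d • ε) = 1 + (c + d) • ε := by
  rw [mul_add, add_mul, add_mul, eps2, mul_one, one_mul, mul_one, add_smul]
  abel

lemma one_add_pow (c : k) (m : ℕ) :
    ((1 : DualNumber k) + c • ε) ^ m = 1 + ((m : k) * c) • ε := by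
  induction m with
  | zero => simp
  | succ m ih =>
    rw [pow_succ, ih, one_add_mul_one_add]
    push_cast; ring_nf

lemma prod_one_add {ι : Type*} (s : Finset ι) (c : ι → k) :
    ∏ i ∈ s, ((1 : DualNumber k) + c i • ε) = 1 + (∑ i ∈ s, c i) • ε := by
  induction s using Finset.cons_induction with
  | empty => simp
  | cons a s h ih => rw [Finset.prod_cons, ih, one_add_mul_one_add, Finset.sum_cons]

lemma prod_one_add_pow {ι : Type*} (s : Finset ι) (c : ι → k) (m : ι → ℕ) :
    ∏ i ∈ s, ((1 : DualNumber k) + c i • ε) ^ (m i)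
      = 1 + (∑ i ∈ s, (m i : k) * c i) • ε := by
  rw [← prod_one_add s (fun i => (m i : k) * c i)]
  exact Finset.prod_congr rfl fun i _ => one_add_pow (c i) (m i)

lemma inl_mul_smul_eps (r c : k) : (inl r : DualNumber k) * (c • ε) = (r * c) • ε := by
  rw [mul_smul_comm, inl_mul_eq_smul, smul_smul, mul_comm c r]

lemma smul_eps_eq_zero {r : k} (h : r • (ε : DualNumber k) = 0) : r = 0 := by
  have := congrArg snd h
  rwa [snd_smul, DualNumber.snd_eps, smul_eq_mul, mul_one, snd_zero] at this

end DN

lemma sum_toNat_eq {n : ℕ} (a : Fin n → ℤ) (hsum : ∑ i, a i = 0) :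
    ∑ i, (a i).toNat = ∑ i, (-a i).toNat := by
  have h : ((∑ i, (a i).toNat : ℕ) : ℤ) - ((∑ i, (-a i).toNat : ℕ) : ℤ) = 0 := by
    push_cast
    rw [← Finset.sum_sub_distrib, ← hsum]
    exact Finset.sum_congr rfl fun i _ => by omega
  exact_mod_cast sub_eq_zero.mp h


lemma map_Fpoly {k : Type*} [Field k] {n : ℕ} (a : Fin n → ℤ) {S : Type*} [CommRing S]
    (φ : MvPolynomial (Fin (n + 2)) k →+* S) :
    φ (Fpoly k n a) =
      (∏ i, (φ (X (⟨n, by omega⟩ : Fin (n + 2))) - φ (X (Fin.castAdd 2 i))) ^ (a i).toNat) *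
          (∏ i, (φ (X (⟨n + 1, by omega⟩ : Fin (n + 2))) - φ (X (Fin.castAdd 2 i))) ^ (-a i).toNat) -
        (∏ i, (φ (X (⟨n, by omega⟩ : Fin (n + 2))) - φ (X (Fin.castAdd 2 i))) ^ (-a i).toNat) *
          (∏ i, (φ (X (⟨n + 1, by omega⟩ : Fin (n + 2))) - φ (X (Fin.castAdd 2 i))) ^ (a i).toNat) := by
  simp [Fpoly]


lemma part2a {k : Type*} [Field k] {n : ℕ} (a : Fin n → ℤ) (hsum : ∑ i, a i = 0)
    (hn : 3 ≤ n) (J : Finset (Fin (n + 2)))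
    (hJfull : J = Finset.image (Fin.castAdd 2) Finset.univ) :
    Fpoly k n a ∈ Pideal k n J := by
  rw [← Ideal.Quotient.eq_zero_iff_mem]
  set Q := Ideal.Quotient.mk (Pideal k n J) with hQdef
  have i₀ : Fin n := ⟨0, by omega⟩
  have hQ : ∀ i : Fin n, Q (X (Fin.castAdd 2 i)) = Q (X (Fin.castAdd 2 (⟨0, by omega⟩ : Fin n))) := by
    intro i
    have hmem : (X (Fin.castAdd 2 i) - X (Fin.castAdd 2 (⟨0, by omega⟩ : Fin n))
        : MvPolynomial (Fin (n + 2)) k) ∈ Pideal k n J := by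
      refine Ideal.subset_span ⟨_, ?_, _, ?_, rfl⟩
      · rw [hJfull]; exact Finset.mem_image_of_mem _ (Finset.mem_univ i)
      · rw [hJfull]; exact Finset.mem_image_of_mem _ (Finset.mem_univ _)
    have h0 := Ideal.Quotient.eq_zero_iff_mem.mpr hmem
    rw [← hQdef] at h0
    rw [RingHom.map_sub, sub_eq_zero] at h0
    exact h0
  show Q (Fpoly k n a) = 0
  rw [map_Fpoly a Q]
  simp only [hQ]
  rw [Finset.prod_pow_eq_pow_sum, Finset.prod_pow_eq_pow_sum,
    Finset.prod_pow_eq_pow_sum, Finset.prod_pow_eq_pow_sum, sum_toNat_eq a hsum]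
  ring

lemma part2b {k : Type*} [Field k] [CharZero k] {n : ℕ} (hn : 3 ≤ n)
    (a : Fin n → ℤ) (hsum : ∑ i, a i = 0) (hnz : ∀ i, a i ≠ 0)
    (J : Finset (Fin (n + 2)))
    (hJfull : J = Finset.image (Fin.castAdd 2) Finset.univ) :
    Fpoly k n a ∉ (Pideal k n J) ^ 2 := by
  intro hmem
  set b : Fin (n + 2) → k := fun i => if h : (i : ℕ) < n then ((a ⟨i, h⟩ : ℤ) : k) else 0 with hb
  set w : Fin (n + 2) → DualNumber k := fun i =>
    if (i : ℕ) = n + 1 then inl 2 else if (i : ℕ) = n then 1 else b i • ε with hw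
  set ψ : MvPolynomial (Fin (n + 2)) k →+* DualNumber k := (aeval w).toRingHom with hψ
  -- ψ maps Pideal into span {ε}
  have hmap : Ideal.map ψ (Pideal k n J) ≤ Ideal.span {(ε : DualNumber k)} := by
    rw [Pideal, Ideal.map_span, Ideal.span_le]
    rintro x ⟨f, ⟨i, hi, j, hj, rfl⟩, rfl⟩
    have hi' : (i : ℕ) < n := by
      rw [hJfull] at hi
      obtain ⟨i', -, rfl⟩ := Finset.mem_image.mp hi
      exact i'.isLt
    have hj' : (j : ℕ) < n := by
      rw [hJfull] at hj
      obtain ⟨j', -, rfl⟩ := Finset.mem_image.mp hj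
      exact j'.isLt
    have hval : ψ (X i - X j) = (b i - b j) • ε := by
      have : ψ (X i - X j) = w i - w j := by
        simp [hψ]
      rw [this, hw]
      simp only
      rw [if_neg (by omega), if_neg (by omega), if_neg (by omega), if_neg (by omega), ← sub_smul]
    rw [SetLike.mem_coe, hval, Ideal.mem_span_singleton]
    exact ⟨inl (b i - b j), by rw [mul_comm, inl_mul_eq_smul]⟩
  -- hence ψ kills Pideal ^ 2
  have h0 : ψ (Fpoly k n a) = 0 := by
    have h1 : ψ (Fpoly k n a) ∈ Ideal.map ψ ((Pideal k n J) ^ 2) :=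
      Ideal.mem_map_of_mem ψ hmem
    rw [Ideal.map_pow, pow_two] at h1
    have h2 : Ideal.map ψ (Pideal k n J) * Ideal.map ψ (Pideal k n J) ≤
        Ideal.span {(ε : DualNumber k)} * Ideal.span {(ε : DualNumber k)} :=
      Ideal.mul_mono hmap hmap
    have h3 : Ideal.span {(ε : DualNumber k)} * Ideal.span {(ε : DualNumber k)} = ⊥ := by
      rw [Ideal.span_singleton_mul_span_singleton, DualNumber.eps_mul_eps,
        Ideal.span_singleton_eq_bot]
    have := h2 h1
    rw [h3] at this
    exact this
  -- now compute ψ (Fpoly)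
  have hwy : ψ (X (⟨n, by omega⟩ : Fin (n + 2))) = 1 := by
    simp only [hψ, AlgHom.toRingHom_eq_coe, RingHom.coe_coe, aeval_X, hw]
    norm_num
  have hwz : ψ (X (⟨n + 1, by omega⟩ : Fin (n + 2))) = inl (2 : k) := by
    simp only [hψ, AlgHom.toRingHom_eq_coe, RingHom.coe_coe, aeval_X, hw]
    norm_num
  have hwc : ∀ i : Fin n, ψ (X (Fin.castAdd 2 i)) = ((a i : ℤ) : k) • ε := by
    intro i
    simp only [hψ, AlgHom.toRingHom_eq_coe, RingHom.coe_coe, aeval_X, hw]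
    rw [if_neg (by have := i.isLt; simp [Fin.coe_castAdd]; omega),
      if_neg (by have := i.isLt; simp [Fin.coe_castAdd]; omega), hb]
    simp only
    rw [dif_pos (show ((Fin.castAdd 2 i : Fin (n + 2)) : ℕ) < n from i.isLt)]
    congr 1
  rw [map_Fpoly a ψ, hwy, hwz] at h0
  simp only [hwc] at h0
  -- rewrite the factors
  have f1 : ∀ i : Fin n, ((1 : DualNumber k) - ((a i : ℤ) : k) • ε)
      = 1 + (-((a i : ℤ) : k)) • ε := fun i => by
    rw [neg_smul, sub_eq_add_neg]
  have f2 : ∀ i : Fin n, ((inl (2 : k) : DualNumber k) - ((a i : ℤ) : k) • ε)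
      = inl (2 : k) * (1 + (-(((a i : ℤ) : k) / 2)) • ε) := fun i => by
    rw [mul_add, mul_one, inl_mul_smul_eps,
      show (2 : k) * -(((a i : ℤ) : k) / 2) = -((a i : ℤ) : k) by field_simp,
      neg_smul, sub_eq_add_neg]
  simp only [f1, f2, mul_pow] at h0
  rw [Finset.prod_mul_distrib, Finset.prod_mul_distrib,
    Finset.prod_pow_eq_pow_sum Finset.univ (fun i => (-(a i)).toNat) ((inl (2:k) : DualNumber k)),
    Finset.prod_pow_eq_pow_sum Finset.univ (fun i => (a i).toNat) ((inl (2:k) : DualNumber k)),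
    sum_toNat_eq a hsum,
    prod_one_add_pow Finset.univ (fun i => -((a i : ℤ) : k)) (fun i => (a i).toNat),
    prod_one_add_pow Finset.univ (fun i => -(((a i : ℤ) : k) / 2)) (fun i => (-(a i)).toNat),
    prod_one_add_pow Finset.univ (fun i => -((a i : ℤ) : k)) (fun i => (-(a i)).toNat),
    prod_one_add_pow Finset.univ (fun i => -(((a i : ℤ) : k) / 2)) (fun i => (a i).toNat),
    TrivSqZeroExt.inl_pow] at h0
  set A := ∑ i, (-(a i)).toNat with hA
  set S₁ := ∑ i : Fin n, ((a i).toNat : k) * -((a i : ℤ) : k) with hS₁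
  set S₂ := ∑ i : Fin n, (((-(a i)).toNat : k)) * -(((a i : ℤ) : k) / 2) with hS₂
  set S₃ := ∑ i : Fin n, (((-(a i)).toNat : k)) * -((a i : ℤ) : k) with hS₃
  set S₄ := ∑ i : Fin n, ((a i).toNat : k) * -(((a i : ℤ) : k) / 2) with hS₄
  -- now h0 : (1 + S₁ • ε) * (inl (2^A) * (1 + S₂ • ε)) - (1 + S₃ • ε) * (inl (2^A) * (1 + S₄ • ε)) = 0
  have hfact : (1 + S₁ • (ε : DualNumber k)) * (inl ((2:k)^A) * (1 + S₂ • ε))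
      - (1 + S₃ • ε) * (inl ((2:k)^A) * (1 + S₄ • ε))
      = ((2:k)^A * ((S₁ + S₂) - (S₃ + S₄))) • ε := by
    rw [mul_left_comm, mul_left_comm (1 + S₃ • (ε : DualNumber k)),
      one_add_mul_one_add, one_add_mul_one_add, ← mul_sub,
      add_sub_add_left_eq_sub, ← sub_smul, inl_mul_smul_eps]
  rw [hfact] at h0
  have hT : (2:k)^A * ((S₁ + S₂) - (S₃ + S₄)) = 0 := smul_eps_eq_zero h0
  -- compute the sum
  have hcast : ∀ i : Fin n, ((a i).toNat : k) - (((-(a i)).toNat : ℕ) : k) = ((a i : ℤ) : k) := by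
    intro i
    have : (((a i).toNat : ℤ) - (((-(a i)).toNat : ℕ) : ℤ)) = a i := by omega
    exact_mod_cast congrArg (Int.cast : ℤ → k) this
  have hS : (S₁ + S₂) - (S₃ + S₄) = -(∑ i : Fin n, ((a i : ℤ) : k) ^ 2) / 2 := by
    rw [hS₁, hS₂, hS₃, hS₄, ← Finset.sum_add_distrib, ← Finset.sum_add_distrib,
      ← Finset.sum_sub_distrib, neg_div, Finset.sum_div, ← Finset.sum_neg_distrib]
    refine Finset.sum_congr rfl fun i _ => ?_
    linear_combination (-((a i : ℤ) : k) / 2) * hcast i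
  have hsq : (∑ i : Fin n, ((a i : ℤ) : k) ^ 2) ≠ 0 := by
    have hpos : (0 : ℤ) < ∑ i : Fin n, (a i) ^ 2 := by
      refine Finset.sum_pos' (fun i _ => sq_nonneg _) ⟨⟨0, by omega⟩, Finset.mem_univ _, ?_⟩
      have := hnz ⟨0, by omega⟩
      positivity
    have h2 : ((∑ i : Fin n, (a i) ^ 2 : ℤ) : k) ≠ 0 := Int.cast_ne_zero.mpr hpos.ne'
    push_cast at h2
    exact h2

  rw [hS] at hT
  have h2A : (2:k)^A ≠ 0 := pow_ne_zero _ two_ne_zero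
  rcases mul_eq_zero.mp hT with h | h
  · exact h2A h
  · rw [div_eq_zero_iff, neg_eq_zero] at h
    rcases h with h | h
    · exact hsq h
    · exact two_ne_zero h

lemma part1 {k : Type*} [Field k] [CharZero k] {n : ℕ} (hn : 3 ≤ n)
    (a : Fin n → ℤ) (hnz : ∀ i, a i ≠ 0)
    (J : Finset (Fin (n + 2))) (hJsub : ∀ i ∈ J, (i : ℕ) < n)
    (hne : J ≠ Finset.image (Fin.castAdd 2) Finset.univ) :
    Fpoly k n a ∉ Pideal k n J := by
  -- find j₀ outside J
  have hsub : J ⊆ Finset.image (Fin.castAdd 2) Finset.univ := by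
    intro i hi
    exact Finset.mem_image.mpr ⟨⟨(i : ℕ), hJsub i hi⟩, Finset.mem_univ _, by
      ext; simp⟩
  obtain ⟨x, hxim, hxJ⟩ := Finset.exists_of_ssubset (lt_of_le_of_ne hsub hne)
  obtain ⟨j₀, -, rfl⟩ := Finset.mem_image.mp hxim
  -- the evaluation point
  set v : Fin (n + 2) → k := fun i =>
    if (i : ℕ) = n + 1 then 2 else if (i : ℕ) = n then 1
      else if i = Fin.castAdd 2 j₀ then 1 else 0 with hv
  intro hmem
  have hker : Pideal k n J ≤ RingHom.ker (eval v) := by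
    rw [Pideal, Ideal.span_le]
    rintro f ⟨i, hi, j, hj, rfl⟩
    have hvi : v i = 0 := by
      have h1 := hJsub i hi
      have h2 : i ≠ Fin.castAdd 2 j₀ := fun h => hxJ (h ▸ hi)
      simp only [hv]
      rw [if_neg (by omega), if_neg (by omega), if_neg h2]
    have hvj : v j = 0 := by
      have h1 := hJsub j hj
      have h2 : j ≠ Fin.castAdd 2 j₀ := fun h => hxJ (h ▸ hj)
      simp only [hv]
      rw [if_neg (by omega), if_neg (by omega), if_neg h2]
    simp [RingHom.mem_ker, hvi, hvj]
  have h0 : eval v (Fpoly k n a) = 0 := hker hmem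
  -- compute the evaluation
  have hy : v ⟨n, by omega⟩ = 1 := by
    simp only [hv]; norm_num
  have hz : v ⟨n + 1, by omega⟩ = 2 := by
    simp only [hv]; norm_num
  have hc : ∀ i : Fin n, v (Fin.castAdd 2 i) = if i = j₀ then 1 else 0 := by
    intro i
    have hlt : ((Fin.castAdd 2 i : Fin (n+2)) : ℕ) = (i : ℕ) := rfl
    have : (Fin.castAdd 2 i = Fin.castAdd 2 j₀) ↔ i = j₀ := by
      simp [Fin.ext_iff]
    simp only [hv, hlt]
    rw [if_neg (by omega), if_neg (by omega)]
    simp [this]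
  rw [map_Fpoly a (eval v)] at h0
  simp only [eval_X, hy, hz, hc] at h0
  -- split on the sign of a j₀
  rcases lt_or_gt_of_ne (hnz j₀) with hneg | hpos
  · -- a j₀ < 0 : second big term vanishes, first doesn't
    have e1 : (∏ i, ((1:k) - if i = j₀ then 1 else 0) ^ (-a i).toNat) = 0 := by
      refine Finset.prod_eq_zero (Finset.mem_univ j₀) ?_
      rw [if_pos rfl, sub_self]
      exact zero_pow (by omega)
    have e2 : (∏ i, ((1:k) - if i = j₀ then 1 else 0) ^ (a i).toNat) ≠ 0 := by
      rw [Finset.prod_ne_zero_iff]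
      intro i _
      by_cases h : i = j₀
      · rw [if_pos h, sub_self]
        have : (a i).toNat = 0 := by rw [h]; omega
        rw [this, pow_zero]; exact one_ne_zero
      · rw [if_neg h, sub_zero, one_pow]; exact one_ne_zero
    have e3 : (∏ i, ((2:k) - if i = j₀ then 1 else 0) ^ (-a i).toNat) ≠ 0 := by
      rw [Finset.prod_ne_zero_iff]
      intro i _
      refine pow_ne_zero _ ?_
      by_cases h : i = j₀
      · rw [if_pos h]; norm_num
      · rw [if_neg h, sub_zero]; exact two_ne_zero
    rw [e1, zero_mul, sub_zero] at h0
    exact mul_ne_zero e2 e3 h0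
  · have e1 : (∏ i, ((1:k) - if i = j₀ then 1 else 0) ^ (a i).toNat) = 0 := by
      refine Finset.prod_eq_zero (Finset.mem_univ j₀) ?_
      rw [if_pos rfl, sub_self]
      exact zero_pow (by omega)
    have e2 : (∏ i, ((1:k) - if i = j₀ then 1 else 0) ^ (-a i).toNat) ≠ 0 := by
      rw [Finset.prod_ne_zero_iff]
      intro i _
      by_cases h : i = j₀
      · rw [if_pos h, sub_self]
        have : (-a i).toNat = 0 := by rw [h]; omega
        rw [this, pow_zero]; exact one_ne_zero
      · rw [if_neg h, sub_zero, one_pow]; exact one_ne_zero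
    have e3 : (∏ i, ((2:k) - if i = j₀ then 1 else 0) ^ (a i).toNat) ≠ 0 := by
      rw [Finset.prod_ne_zero_iff]
      intro i _
      refine pow_ne_zero _ ?_
      by_cases h : i = j₀
      · rw [if_pos h]; norm_num
      · rw [if_neg h, sub_zero]; exact two_ne_zero
    rw [e1, zero_mul, zero_sub, neg_eq_zero] at h0
    exact mul_ne_zero e2 e3 h0

/-- for `J ⊆ {1,…,n}` (containing neither `n+1` nor `n+2`) with
`|J| ≥ 2`: if `J ≠ {1,…,n}` then `F ∉ P_J` (multiplicity 0), and if
`J = {1,…,n}` then `F ∈ P_J` but `F ∉ P_J²` (multiplicity exactly 1). -/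
theorem stmt_11 {k : Type*} [Field k] [CharZero k] {n : ℕ} (hn : 3 ≤ n)
    (a : Fin n → ℤ) (hsum : ∑ i, a i = 0) (hgcd : Finset.univ.gcd a = 1)
    (hnz : ∀ i, a i ≠ 0)
    (J : Finset (Fin (n + 2))) (hJsub : ∀ i ∈ J, (i : ℕ) < n) (hJ : 2 ≤ J.card) :
    (J ≠ Finset.image (Fin.castAdd 2) Finset.univ → Fpoly k n a ∉ Pideal k n J) ∧
    (J = Finset.image (Fin.castAdd 2) Finset.univ →
      Fpoly k n a ∈ Pideal k n J ∧ Fpoly k n a ∉ (Pideal k n J) ^ 2) := by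
  refine ⟨fun hne => part1 hn a hnz J hJsub hne, fun hfull => ⟨part2a a hsum hn J hfull, part2b hn a hsum hnz J hfull⟩⟩
end

section
/- Let J ⊆ {1, …, n+2} with |J| ≥ 2 and |J ∩ {n+1, n+2}| = 1, and set m = min( Σ_{i ∈ J, i ≤ n, a_i > 0} a_i , Σ_{i ∈ J, i ≤ n, a_i < 0} (−a_i) ). Then F ∈ P_J^m and F ∉ P_J^{m+1}; that is, the multiplicity of F along the partial diagonal indexed by J equals m. -/
open MvPolynomial

noncomputable def Gpoly (k : Type*) [Field k] (n : ℕ) (q q' : Fin (n + 2)) (b c : Fin n → ℕ) :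
    MvPolynomial (Fin (n + 2)) k :=
  (∏ i, (X q - X (Fin.castAdd 2 i)) ^ b i) * (∏ i, (X q' - X (Fin.castAdd 2 i)) ^ c i) -
    (∏ i, (X q - X (Fin.castAdd 2 i)) ^ c i) * (∏ i, (X q' - X (Fin.castAdd 2 i)) ^ b i)

lemma prod_pow_mem_ideal_pow {R ι : Type*} [CommRing R] (I : Ideal R) (s : Finset ι)
    (f : ι → R) (e : ι → ℕ) (h : ∀ i ∈ s, f i ∈ I) :
    (∏ i ∈ s, f i ^ e i) ∈ I ^ (∑ i ∈ s, e i) := by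
  classical
  induction s using Finset.cons_induction with
  | empty => simp
  | cons a s ha ih =>
    rw [Finset.prod_cons, Finset.sum_cons, pow_add]
    exact Ideal.mul_mem_mul (Ideal.pow_mem_pow (h a (Finset.mem_cons_self a s)) _)
      (ih fun i hi => h i (Finset.mem_cons_of_mem hi))

lemma core_lemma {k : Type*} [Field k] [CharZero k] {n : ℕ}
    (q q' : Fin (n + 2)) (hq : ∀ i : Fin n, Fin.castAdd 2 i ≠ q)
    (hq' : ∀ i : Fin n, Fin.castAdd 2 i ≠ q')
    (J : Finset (Fin (n + 2))) (hqJ : q ∈ J) (hq'J : q' ∉ J)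
    (b c : Fin n → ℕ) (hbc : ∀ i, b i = 0 ∨ c i = 0)
    (i₀ : Fin n) (hi₀J : Fin.castAdd 2 i₀ ∈ J) (hi₀ : b i₀ ≠ 0)
    (hle : (∑ i ∈ Finset.univ.filter (fun i : Fin n => Fin.castAdd 2 i ∈ J), c i)
         ≤ ∑ i ∈ Finset.univ.filter (fun i : Fin n => Fin.castAdd 2 i ∈ J), b i) :
    Gpoly k n q q' b c ∈ (Pideal k n J) ^
        (∑ i ∈ Finset.univ.filter (fun i : Fin n => Fin.castAdd 2 i ∈ J), c i) ∧
    Gpoly k n q q' b c ∉ (Pideal k n J) ^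
        ((∑ i ∈ Finset.univ.filter (fun i : Fin n => Fin.castAdd 2 i ∈ J), c i) + 1) := by
  classical
  set P := Pideal k n J with hP
  set mc := ∑ i ∈ Finset.univ.filter (fun i : Fin n => Fin.castAdd 2 i ∈ J), c i with hmc
  set mb := ∑ i ∈ Finset.univ.filter (fun i : Fin n => Fin.castAdd 2 i ∈ J), b i with hmb
  have hgen : ∀ i : Fin n, Fin.castAdd 2 i ∈ J →
      (X q - X (Fin.castAdd 2 i) : MvPolynomial (Fin (n + 2)) k) ∈ P :=
    fun i hi => Ideal.subset_span ⟨q, hqJ, _, hi, rfl⟩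
  have hmemgen : ∀ e : Fin n → ℕ,
      (∏ i, (X q - X (Fin.castAdd 2 i)) ^ e i : MvPolynomial (Fin (n + 2)) k) ∈
        P ^ (∑ i ∈ Finset.univ.filter (fun i : Fin n => Fin.castAdd 2 i ∈ J), e i) := by
    intro e
    rw [← Finset.prod_filter_mul_prod_filter_not Finset.univ (fun i => Fin.castAdd 2 i ∈ J)]
    exact Ideal.mul_mem_right _ _ (prod_pow_mem_ideal_pow _ _ _ _
      (fun i hi => hgen i (Finset.mem_filter.mp hi).2))
  constructor
  · apply Ideal.sub_mem
    · exact Ideal.pow_le_pow_right hle (Ideal.mul_mem_right _ _ (hmemgen b))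
    · exact Ideal.mul_mem_right _ _ (hmemgen c)
  · intro hmem
    set cval : Fin (n + 2) → k := fun i => if i ∈ J then ((n + 2 : ℕ) : k) else (i.val : k)
      with hcvaldef
    set dval : Fin (n + 2) → k := fun i => if i = q then ((i₀ : Fin n).val : k) else (i.val : k)
      with hdvaldef
    set Φ : MvPolynomial (Fin (n + 2)) k →ₐ[k] Polynomial k :=
      aeval (fun i => Polynomial.C (cval i) + Polynomial.X * Polynomial.C (dval i)) with hΦdef
    have hΦX : ∀ i, Φ (X i) = Polynomial.C (cval i) + Polynomial.X * Polynomial.C (dval i) :=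
      fun i => aeval_X _ i
    have hcJ : ∀ i ∈ J, cval i = ((n + 2 : ℕ) : k) := fun i hi => if_pos hi
    have hcN : ∀ i : Fin (n + 2), i ∉ J → cval i = (i.val : k) := fun i hi => if_neg hi
    have hdq : dval q = ((i₀ : Fin n).val : k) := if_pos rfl
    have hdN : ∀ i : Fin n, dval (Fin.castAdd 2 i) = ((i : Fin n).val : k) := by
      intro i; rw [hdvaldef]; simp only [if_neg (hq i)]; norm_num
    -- map of the ideal
    have hPle : Ideal.map (Φ : MvPolynomial (Fin (n + 2)) k →+* Polynomial k) P ≤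
        Ideal.span {Polynomial.X} := by
      rw [hP, Pideal, Ideal.map_span, Ideal.span_le]
      rintro f ⟨g, ⟨i, hi, j, hj, rfl⟩, rfl⟩
      simp only [RingHom.coe_coe, map_sub, hΦX, hcJ i hi, hcJ j hj]
      exact Ideal.mem_span_singleton'.mpr
        ⟨Polynomial.C (dval i) - Polynomial.C (dval j), by ring⟩
    have key : Φ (Gpoly k n q q' b c) ∈ Ideal.span {Polynomial.X ^ (mc + 1)} := by
      have h1 : Φ (Gpoly k n q q' b c) ∈
          Ideal.map (Φ : MvPolynomial (Fin (n + 2)) k →+* Polynomial k) (P ^ (mc + 1)) :=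
        Ideal.mem_map_of_mem _ hmem
      rw [Ideal.map_pow] at h1
      have h2 := (Ideal.pow_right_mono hPle (mc + 1)) h1
      rwa [Ideal.span_singleton_pow] at h2
    obtain ⟨r, hr⟩ := Ideal.mem_span_singleton'.mp key
    have hcoeff : (Φ (Gpoly k n q q' b c)).coeff mc = 0 := by
      rw [← hr, Polynomial.coeff_mul_X_pow']
      simp
    -- now compute the coefficient explicitly
    have hT1 : Φ ((∏ i, (X q - X (Fin.castAdd 2 i)) ^ b i) *
        ∏ i, (X q' - X (Fin.castAdd 2 i)) ^ c i) = 0 := by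
      rw [map_mul, map_prod]
      apply mul_eq_zero_of_left
      apply Finset.prod_eq_zero (Finset.mem_univ i₀)
      rw [map_pow]
      have hz : Φ (X q - X (Fin.castAdd 2 i₀)) = 0 := by
        rw [map_sub, hΦX, hΦX, hcJ q hqJ, hcJ _ hi₀J, hdq, hdN i₀]
        ring
      rw [hz, zero_pow hi₀]
    have hfq : ∀ i : Fin n, Φ (X q - X (Fin.castAdd 2 i)) =
        Polynomial.C (cval q - cval (Fin.castAdd 2 i)) +
          Polynomial.X * Polynomial.C (dval q - dval (Fin.castAdd 2 i)) := by
      intro i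
      rw [map_sub, hΦX, hΦX, map_sub, map_sub]
      ring
    have hfq' : ∀ i : Fin n, Φ (X q' - X (Fin.castAdd 2 i)) =
        Polynomial.C (cval q' - cval (Fin.castAdd 2 i)) +
          Polynomial.X * Polynomial.C (dval q' - dval (Fin.castAdd 2 i)) := by
      intro i
      rw [map_sub, hΦX, hΦX, map_sub, map_sub]
      ring
    set g : Fin n → Polynomial k := fun i =>
      if Fin.castAdd 2 i ∈ J then (Polynomial.C (dval q - dval (Fin.castAdd 2 i))) ^ c i
      else (Polynomial.C (cval q - cval (Fin.castAdd 2 i)) +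
        Polynomial.X * Polynomial.C (dval q - dval (Fin.castAdd 2 i))) ^ c i with hgdef
    have hsplit : Φ (∏ i, (X q - X (Fin.castAdd 2 i)) ^ c i) =
        Polynomial.X ^ mc * ∏ i, g i := by
      rw [map_prod]
      have hfac : ∀ i : Fin n, Φ ((X q - X (Fin.castAdd 2 i)) ^ c i) =
          Polynomial.X ^ (if Fin.castAdd 2 i ∈ J then c i else 0) * g i := by
        intro i
        rw [map_pow, hfq i, hgdef]
        by_cases hi : Fin.castAdd 2 i ∈ J
        · have hc0 : cval q - cval (Fin.castAdd 2 i) = 0 := by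
            rw [hcJ q hqJ, hcJ _ hi]; ring
          simp only [if_pos hi, hc0, map_zero, zero_add, mul_pow]
        · simp only [if_neg hi, pow_zero, one_mul]
      rw [Finset.prod_congr rfl (fun i _ => hfac i), Finset.prod_mul_distrib,
        Finset.prod_pow_eq_pow_sum]
      congr 2
      rw [hmc, Finset.sum_filter]
    have hT2 : Φ ((∏ i, (X q - X (Fin.castAdd 2 i)) ^ c i) *
        ∏ i, (X q' - X (Fin.castAdd 2 i)) ^ b i) =
        Polynomial.X ^ mc * ((∏ i, g i) *
          ∏ i, (Polynomial.C (cval q' - cval (Fin.castAdd 2 i)) +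
            Polynomial.X * Polynomial.C (dval q' - dval (Fin.castAdd 2 i))) ^ b i) := by
      rw [map_mul, hsplit, map_prod]
      simp only [map_pow, hfq']
      ring
    have hGval : Φ (Gpoly k n q q' b c) =
        -(Polynomial.X ^ mc * ((∏ i, g i) *
          ∏ i, (Polynomial.C (cval q' - cval (Fin.castAdd 2 i)) +
            Polynomial.X * Polynomial.C (dval q' - dval (Fin.castAdd 2 i))) ^ b i)) := by
      rw [Gpoly, map_sub, hT1, hT2, zero_sub]
    -- the constant coefficient of the cofactor is nonzero
    set W : Polynomial k := (∏ i, g i) *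
      ∏ i, (Polynomial.C (cval q' - cval (Fin.castAdd 2 i)) +
        Polynomial.X * Polynomial.C (dval q' - dval (Fin.castAdd 2 i))) ^ b i with hWdef
    have hWeval : W.eval 0 ≠ 0 := by
      rw [hWdef, Polynomial.eval_mul, Polynomial.eval_prod, Polynomial.eval_prod]
      apply mul_ne_zero
      · rw [Finset.prod_ne_zero_iff]
        intro i _
        rw [hgdef]
        by_cases hi : Fin.castAdd 2 i ∈ J
        · simp only [if_pos hi, Polynomial.eval_pow, Polynomial.eval_C]
          rcases Nat.eq_zero_or_pos (c i) with hc | hc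
          · rw [hc, pow_zero]; exact one_ne_zero
          · apply pow_ne_zero
            rw [hdq, hdN i]
            have hne : i ≠ i₀ := by
              intro h; rw [h] at hc
              rcases hbc i₀ with h' | h'
              · exact hi₀ h'
              · omega
            have : (i₀ : Fin n).val ≠ (i : Fin n).val := fun h => hne (Fin.ext h.symm)
            exact sub_ne_zero.mpr (fun h => this (Nat.cast_injective h))
        · simp only [if_neg hi, Polynomial.eval_pow]
          apply pow_ne_zero
          simp only [Polynomial.eval_add, Polynomial.eval_mul, Polynomial.eval_C,
            Polynomial.eval_X, zero_mul, add_zero]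
          rw [hcJ q hqJ, hcN _ hi]
          have hlt : (Fin.castAdd 2 i).val ≠ n + 2 := by
            rw [Fin.coe_castAdd]; omega
          exact sub_ne_zero.mpr (fun h => hlt (Nat.cast_injective h.symm))
      · rw [Finset.prod_ne_zero_iff]
        intro i _
        simp only [Polynomial.eval_pow, Polynomial.eval_add, Polynomial.eval_mul,
          Polynomial.eval_C, Polynomial.eval_X, zero_mul, add_zero]
        apply pow_ne_zero
        by_cases hi : Fin.castAdd 2 i ∈ J
        · rw [hcN q' hq'J, hcJ _ hi]
          have hlt : (q' : Fin (n + 2)).val ≠ n + 2 := by omega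
          exact sub_ne_zero.mpr (fun h => hlt (Nat.cast_injective h))
        · rw [hcN q' hq'J, hcN _ hi]
          have : (q' : Fin (n + 2)).val ≠ (Fin.castAdd 2 i).val :=
            fun h => (hq' i) (Fin.ext h.symm)
          exact sub_ne_zero.mpr (fun h => this (Nat.cast_injective h))
    apply hWeval
    have := hcoeff
    rw [hGval, Polynomial.coeff_neg, neg_eq_zero] at this
    rw [← Polynomial.coeff_zero_eq_eval_zero]
    have h3 : (Polynomial.X ^ mc * W).coeff mc = W.coeff 0 := by
      have := Polynomial.coeff_X_pow_mul W mc 0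
      simpa using this
    rw [← h3]
    exact this

lemma Gpoly_swap_exp {k : Type*} [Field k] {n : ℕ} (q q' : Fin (n + 2)) (b c : Fin n → ℕ) :
    Gpoly k n q q' c b = - Gpoly k n q q' b c := by
  rw [Gpoly, Gpoly]; ring

lemma Gpoly_swap_q {k : Type*} [Field k] {n : ℕ} (q q' : Fin (n + 2)) (b c : Fin n → ℕ) :
    Gpoly k n q' q b c = - Gpoly k n q q' b c := by
  rw [Gpoly, Gpoly]; ring

set_option maxHeartbeats 2000000 in
/-- for `J ⊆ {1,…,n+2}` with `|J| ≥ 2` containing exactly one of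
`n+1, n+2`, the multiplicity of `F` along the partial diagonal indexed by `J`
is exactly `m = min(Σ_{i ∈ J, aᵢ>0} aᵢ, Σ_{i ∈ J, aᵢ<0} (−aᵢ))`:
`F ∈ P_J ^ m` and `F ∉ P_J ^ (m+1)`. -/
theorem stmt_12 {k : Type*} [Field k] [CharZero k] {n : ℕ} (hn : 3 ≤ n)
    (a : Fin n → ℤ) (hsum : ∑ i, a i = 0) (hgcd : Finset.univ.gcd a = 1)
    (hnz : ∀ i, a i ≠ 0)
    (J : Finset (Fin (n + 2))) (hJ : 2 ≤ J.card)
    (hJq : (J ∩ ({⟨n, by omega⟩, ⟨n + 1, by omega⟩} : Finset (Fin (n + 2)))).card = 1) :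
    Fpoly k n a ∈ (Pideal k n J) ^
        (min (∑ i ∈ Finset.univ.filter (fun i : Fin n => Fin.castAdd 2 i ∈ J), (a i).toNat)
             (∑ i ∈ Finset.univ.filter (fun i : Fin n => Fin.castAdd 2 i ∈ J), (-a i).toNat)) ∧
    Fpoly k n a ∉ (Pideal k n J) ^
        (min (∑ i ∈ Finset.univ.filter (fun i : Fin n => Fin.castAdd 2 i ∈ J), (a i).toNat)
             (∑ i ∈ Finset.univ.filter (fun i : Fin n => Fin.castAdd 2 i ∈ J), (-a i).toNat) + 1) := by
  classical
  set qn : Fin (n + 2) := ⟨n, by omega⟩ with hqndef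
  set qn1 : Fin (n + 2) := ⟨n + 1, by omega⟩ with hqn1def
  have hF : Fpoly k n a =
      Gpoly k n qn qn1 (fun i => (a i).toNat) (fun i => (-a i).toNat) := rfl
  have hqn : ∀ i : Fin n, Fin.castAdd 2 i ≠ qn := by
    intro i h
    have := congrArg Fin.val h
    simp [hqndef] at this
    omega
  have hqn1 : ∀ i : Fin n, Fin.castAdd 2 i ≠ qn1 := by
    intro i h
    have := congrArg Fin.val h
    simp [hqn1def] at this
    omega
  have hqne : qn ≠ qn1 := by
    intro h
    have := congrArg Fin.val h
    simp [hqndef, hqn1def] at this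
  have hcases : (qn ∈ J ∧ qn1 ∉ J) ∨ (qn1 ∈ J ∧ qn ∉ J) := by
    by_cases h1 : qn ∈ J <;> by_cases h2 : qn1 ∈ J
    · exfalso
      have hsub : ({qn, qn1} : Finset (Fin (n + 2))) ⊆ J ∩ {qn, qn1} := by
        intro x hx
        rw [Finset.mem_inter]
        refine ⟨?_, hx⟩
        rcases Finset.mem_insert.mp hx with h | h
        · rw [h]; exact h1
        · rw [Finset.mem_singleton.mp h]; exact h2
      have := Finset.card_le_card hsub
      rw [Finset.card_pair hqne, hJq] at this
      omega
    · exact Or.inl ⟨h1, h2⟩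
    · exact Or.inr ⟨h2, h1⟩
    · exfalso
      have : J ∩ ({qn, qn1} : Finset (Fin (n + 2))) = ∅ := by
        apply Finset.eq_empty_of_forall_notMem
        intro x hx
        rcases Finset.mem_inter.mp hx with ⟨hxJ, hxp⟩
        rcases Finset.mem_insert.mp hxp with h | h
        · exact h1 (h ▸ hxJ)
        · exact h2 ((Finset.mem_singleton.mp h) ▸ hxJ)
      rw [this] at hJq
      simp at hJq
  have hJn : ∃ i : Fin n, Fin.castAdd 2 i ∈ J := by
    by_contra hcon
    push_neg at hcon
    have hsub : J ⊆ ({qn, qn1} : Finset (Fin (n + 2))) := by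
      intro x hxJ
      by_cases hx : x.val < n
      · exact absurd hxJ (by
          have : x = Fin.castAdd 2 ⟨x.val, hx⟩ := by
            apply Fin.ext; simp
          rw [this]; exact hcon _)
      · have : x.val = n ∨ x.val = n + 1 := by omega
        rcases this with h | h
        · exact Finset.mem_insert.mpr (Or.inl (Fin.ext h))
        · exact Finset.mem_insert.mpr (Or.inr (Finset.mem_singleton.mpr (Fin.ext h)))
    rw [Finset.inter_eq_left.mpr hsub] at hJq
    omega
  set mb := ∑ i ∈ Finset.univ.filter (fun i : Fin n => Fin.castAdd 2 i ∈ J), (a i).toNat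
    with hmb
  set mc := ∑ i ∈ Finset.univ.filter (fun i : Fin n => Fin.castAdd 2 i ∈ J), (-a i).toNat
    with hmc
  have hbc : ∀ i : Fin n, (a i).toNat = 0 ∨ (-a i).toNat = 0 := fun i => by omega
  have hpos : mb + mc ≠ 0 := by
    intro h0
    obtain ⟨i, hi⟩ := hJn
    have hb0 : mb = 0 := by omega
    have hc0 : mc = 0 := by omega
    rw [hmb, Finset.sum_eq_zero_iff] at hb0
    rw [hmc, Finset.sum_eq_zero_iff] at hc0
    have hif : i ∈ Finset.univ.filter (fun i : Fin n => Fin.castAdd 2 i ∈ J) :=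
      Finset.mem_filter.mpr ⟨Finset.mem_univ _, hi⟩
    have := hnz i
    have := hb0 i hif
    have := hc0 i hif
    omega
  rcases le_total mc mb with hle | hle
  · have hmbne : mb ≠ 0 := by omega
    obtain ⟨i₀, hi₀f, hi₀⟩ := Finset.exists_ne_zero_of_sum_ne_zero (hmb ▸ hmbne)
    have hi₀J : Fin.castAdd 2 i₀ ∈ J := (Finset.mem_filter.mp hi₀f).2
    rw [min_eq_right hle, hF]
    rcases hcases with ⟨h1, h2⟩ | ⟨h1, h2⟩
    · exact core_lemma (k := k) qn qn1 hqn hqn1 J h1 h2 (fun i => (a i).toNat) (fun i => (-a i).toNat) hbc i₀ hi₀J hi₀ hle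
    · have hcore := core_lemma (k := k) qn1 qn hqn1 hqn J h1 h2 (fun i => (a i).toNat) (fun i => (-a i).toNat) hbc i₀ hi₀J hi₀ hle
      rw [Gpoly_swap_q (k := k) qn1 qn (fun i => (a i).toNat) (fun i => (-a i).toNat)]
      exact ⟨neg_mem hcore.1, fun h => hcore.2 (by simpa using neg_mem h)⟩
  · have hmcne : mc ≠ 0 := by omega
    obtain ⟨i₀, hi₀f, hi₀⟩ := Finset.exists_ne_zero_of_sum_ne_zero (hmc ▸ hmcne)
    have hi₀J : Fin.castAdd 2 i₀ ∈ J := (Finset.mem_filter.mp hi₀f).2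
    have hbc' : ∀ i : Fin n, (-a i).toNat = 0 ∨ (a i).toNat = 0 := fun i => (hbc i).symm
    rw [min_eq_left hle, hF]
    rcases hcases with ⟨h1, h2⟩ | ⟨h1, h2⟩
    · have hcore := core_lemma (k := k) qn qn1 hqn hqn1 J h1 h2
        (fun i => (-a i).toNat) (fun i => (a i).toNat) hbc' i₀ hi₀J hi₀ hle
      rw [show Gpoly k n qn qn1 (fun i => (a i).toNat) (fun i => (-a i).toNat) =
          -Gpoly k n qn qn1 (fun i => (-a i).toNat) (fun i => (a i).toNat) from
        Gpoly_swap_exp (k := k) qn qn1 (fun i => (-a i).toNat) (fun i => (a i).toNat)]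
      exact ⟨neg_mem hcore.1, fun h => hcore.2 (by simpa using neg_mem h)⟩
    · have hcore := core_lemma (k := k) qn1 qn hqn1 hqn J h1 h2
        (fun i => (-a i).toNat) (fun i => (a i).toNat) hbc' i₀ hi₀J hi₀ hle
      rw [show Gpoly k n qn qn1 (fun i => (a i).toNat) (fun i => (-a i).toNat) =
          Gpoly k n qn1 qn (fun i => (-a i).toNat) (fun i => (a i).toNat) from by
        rw [Gpoly, Gpoly]; ring]
      exact hcore
end
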